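/- arXiv:2502.12615 — 10 statements merged into one kernel-verified Lean document; each statement's English description precedes it below -/
import Mathlib

section
/- For every integer k ≥ 1 and every n ≥ 0, one has F_k(L_k(n)) = n, and L_k(F_k(n)) ∈ {n, n+1}. Consequently F_k and L_k form a Galois insertion: for all n, m ≥ 0, F_k(n) ≤ m if and only if n ≤ L_k(m). -/
/-- Fuel-limited version of Hofstadter's recursion:
`Fa k fuel n` equals `F_k n` whenever `fuel ≥ n`. -/
def Fa (k : ℕ) : ℕ → ℕ → ℕ
  | 0, _ => 0
  | _ + 1, 0 => 0
  | fuel + 1, n + 1 => (n + 1) - (Fa k fuel)^[k] n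

/-- Hofstadter's function `F_k` : `F k 0 = 0` and `F k n = n - (F k)^[k] (n-1)`
for `n ≥ 1` (since `F_k m ≤ m`, the fuel `n` is always sufficient). -/
def F (k : ℕ) (n : ℕ) : ℕ := Fa k n n

/-- The function `L_k n = n + (F k)^[k-1] n`. -/
def L (k : ℕ) (n : ℕ) : ℕ := n + (F k)^[k - 1] n

lemma Fa_le (k fuel n : ℕ) : Fa k fuel n ≤ n := by
  match fuel, n with
  | 0, n => simp [Fa]
  | fuel+1, 0 => simp [Fa]
  | fuel+1, n+1 => rw [Fa]; omega

lemma Fa_fuel_eq : ∀ (n k a b : ℕ), n ≤ a → n ≤ b → Fa k a n = Fa k b n := by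
  intro n
  induction n using Nat.strong_induction_on with
  | _ n ih =>
    intro k a b ha hb
    match n, a, b with
    | 0, a, b => cases a <;> cases b <;> simp [Fa]
    | n+1, a+1, b+1 =>
      have hiter : ∀ j x, x ≤ n → (Fa k a)^[j] x = (Fa k b)^[j] x := by
        intro j
        induction j with
        | zero => intro x _; simp
        | succ j ihj =>
          intro x hx
          rw [Function.iterate_succ_apply, Function.iterate_succ_apply]
          rw [ih x (by omega) k a b (by omega) (by omega)]
          exact ihj _ (le_trans (Fa_le k b x) hx)
      rw [Fa, Fa, hiter k n le_rfl]

lemma F_le (k n : ℕ) : F k n ≤ n := Fa_le k n n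

lemma Fa_eq_F (k m : ℕ) : ∀ x, x ≤ m → Fa k m x = F k x := by
  intro x hx
  exact Fa_fuel_eq x k m x hx le_rfl

lemma Fa_iter_eq_F_iter (k m : ℕ) : ∀ j x, x ≤ m → (Fa k m)^[j] x = (F k)^[j] x := by
  intro j
  induction j with
  | zero => intro x _; simp
  | succ j ihj =>
    intro x hx
    rw [Function.iterate_succ_apply, Function.iterate_succ_apply,
      Fa_eq_F k m x hx]
    exact ihj _ (le_trans (F_le k x) hx)

lemma F_succ (k n : ℕ) : F k (n+1) = (n+1) - (F k)^[k] n := by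
  show Fa k (n+1) (n+1) = _
  rw [Fa, Fa_iter_eq_F_iter k n k n le_rfl]

lemma F_zero (k : ℕ) : F k 0 = 0 := rfl

lemma F_iter_le (k j n : ℕ) : (F k)^[j] n ≤ n := by
  induction j with
  | zero => simp
  | succ j ihj =>
    rw [Function.iterate_succ_apply']
    exact le_trans (F_le k _) ihj

lemma F_succ_add (k n : ℕ) : F k (n+1) + (F k)^[k] n = n + 1 := by
  have h1 := F_succ k n
  have h2 := F_iter_le k k n
  omega

lemma F_step (k : ℕ) : ∀ n, F k (n+1) = F k n ∨ F k (n+1) = F k n + 1 := by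
  intro n
  induction n using Nat.strong_induction_on with
  | _ n ih =>
    cases n with
    | zero =>
      right
      rw [F_succ, F_zero, Function.iterate_fixed (F_zero k)]
    | succ m =>
      have hiter : ∀ j, (F k)^[j] (m+1) = (F k)^[j] m ∨
          (F k)^[j] (m+1) = (F k)^[j] m + 1 := by
        intro j
        induction j with
        | zero => right; rfl
        | succ j ihj =>
          rw [Function.iterate_succ_apply', Function.iterate_succ_apply']
          rcases ihj with h | h
          · left; rw [h]
          · rw [h]
            exact ih ((F k)^[j] m) (Nat.lt_succ_of_le (F_iter_le k j m))
      have h1 := F_succ_add k (m+1)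
      have h2 := F_succ_add k m
      rcases hiter k with h | h <;> omega

lemma F_mono (k : ℕ) : Monotone (F k) := by
  apply monotone_nat_of_le_succ
  intro n
  rcases F_step k n with h | h <;> omega

lemma F_iter_mono (k j : ℕ) : Monotone ((F k)^[j]) := (F_mono k).iterate j

lemma L_mono (k : ℕ) : Monotone (L k) := by
  intro a b hab
  unfold L
  exact Nat.add_le_add hab (F_iter_mono k (k-1) hab)

lemma L_F (k : ℕ) (hk : 1 ≤ k) (n : ℕ) :
    L k (F k n) = n ∨ L k (F k n) = n + 1 := by
  have hL : L k (F k n) = F k n + (F k)^[k] n := by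
    unfold L
    congr 1
    rw [← Function.iterate_succ_apply]
    congr 1
    omega
  have h1 := F_succ_add k n
  rcases F_step k n with h | h <;> omega

lemma F_unbounded (k : ℕ) (hk : 1 ≤ k) (n : ℕ) : n ≤ 2 * F k n := by
  cases n with
  | zero => simp
  | succ m =>
    have h1 := F_succ_add k m
    have h2 : (F k)^[k] m ≤ F k m := by
      have : (F k)^[k] m = (F k)^[k-1] (F k m) := by
        rw [← Function.iterate_succ_apply]
        congr 1
        omega
      rw [this]
      exact F_iter_le k (k-1) (F k m)
    have h3 : F k m ≤ F k (m+1) := F_mono k (Nat.le_succ m)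
    omega

lemma F_ivt (k : ℕ) : ∀ m v, v ≤ F k m → ∃ j, F k j = v := by
  intro m
  induction m with
  | zero =>
    intro v hv
    rw [F_zero] at hv
    exact ⟨0, by rw [F_zero]; omega⟩
  | succ m ihm =>
    intro v hv
    by_cases h : v ≤ F k m
    · exact ihm v h
    · refine ⟨m+1, ?_⟩
      rcases F_step k m with hs | hs <;> omega

lemma F_surj (k : ℕ) (hk : 1 ≤ k) (v : ℕ) : ∃ m, F k m = v := by
  have h := F_unbounded k hk (2*v)
  exact F_ivt k (2*v) v (by omega)

lemma F_L (k : ℕ) (hk : 1 ≤ k) (n : ℕ) : F k (L k n) = n := by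
  obtain ⟨m, hm⟩ := F_surj k hk n
  have hL := L_F k hk m
  rw [hm] at hL
  rcases hL with h | h
  · rw [h, hm]
  · rw [h]
    -- L k n = m + 1 forces F k (m+1) = F k m
    have hLF : L k (F k m) = F k m + (F k)^[k] m := by
      unfold L
      congr 1
      rw [← Function.iterate_succ_apply]
      congr 1
      omega
    rw [hm] at hLF
    have h1 := F_succ_add k m
    rcases F_step k m with hs | hs
    · omega
    · exfalso; omega

/-- For `k ≥ 1`: `F_k (L_k n) = n`, `L_k (F_k n) ∈ {n, n+1}`, and `F_k`, `L_k`
form a Galois insertion: `F_k n ≤ m ↔ n ≤ L_k m`. -/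
theorem F_L_galois_insertion (k : ℕ) (hk : 1 ≤ k) :
    (∀ n : ℕ, F k (L k n) = n) ∧
    (∀ n : ℕ, L k (F k n) = n ∨ L k (F k n) = n + 1) ∧
    (∀ n m : ℕ, F k n ≤ m ↔ n ≤ L k m) := by
  refine ⟨F_L k hk, L_F k hk, ?_⟩
  intro n m
  constructor
  · intro h
    have h1 : n ≤ L k (F k n) := by rcases L_F k hk n with h' | h' <;> omega
    exact le_trans h1 (L_mono k h)
  · intro h
    have := F_mono k h
    rwa [F_L k hk m] at this
end

section
/- For every integer k ≥ 1 and every p ≥ 0, A_{k,p} equals the number of subsets S of {1, …, p} such that any two distinct elements of S differ by at least k. -/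
/-- The Fibonacci-like sequence `A_{k,p}` : `A k p = p+1` for `p < k`,
and `A k p = A k (p-1) + A k (p-k)` for `p ≥ k`.
(The `max k 1` only makes termination evident; in all statements `k ≥ 1`.) -/
def A (k : ℕ) : ℕ → ℕ
  | 0 => 1
  | p + 1 => if p + 1 < k then p + 2 else A k p + A k (p + 1 - max k 1)
termination_by p => p
decreasing_by all_goals omega

private lemma A_succ (k p : ℕ) :
    A k (p + 1) = if p + 1 < k then p + 2 else A k p + A k (p + 1 - max k 1) := by
  rw [A]

private lemma A_of_lt (k : ℕ) : ∀ p, p < k → A k p = p + 1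
  | 0, _ => by rw [A]
  | p + 1, h => by rw [A_succ, if_pos h]

open Finset in
private lemma card_split (k p : ℕ) :
    ((Finset.Icc 1 (p+1)).powerset.filter
      (fun S => ∀ a ∈ S, ∀ b ∈ S, a ≠ b → k ≤ Nat.dist a b)).card
    = ((Finset.Icc 1 p).powerset.filter
      (fun S => ∀ a ∈ S, ∀ b ∈ S, a ≠ b → k ≤ Nat.dist a b)).card
    + ((Finset.Icc 1 (p+1)).powerset.filter
      (fun S => (∀ a ∈ S, ∀ b ∈ S, a ≠ b → k ≤ Nat.dist a b) ∧ p+1 ∈ S)).card := by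
  rw [← Finset.card_filter_add_card_filter_not
    (s := (Finset.Icc 1 (p+1)).powerset.filter
      (fun S => ∀ a ∈ S, ∀ b ∈ S, a ≠ b → k ≤ Nat.dist a b)) (p := fun S => p+1 ∈ S)]
  rw [Nat.add_comm]
  congr 1
  · rw [Finset.filter_filter]
    congr 1
    ext S
    simp only [Finset.mem_filter, Finset.mem_powerset, Finset.subset_iff, Finset.mem_Icc]
    constructor
    · rintro ⟨hsub, hsp, hnot⟩
      refine ⟨fun x hx => ?_, hsp⟩
      have h1 := hsub hx
      have : x ≠ p + 1 := fun h => hnot (h ▸ hx)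
      omega
    · rintro ⟨hsub, hsp⟩
      refine ⟨fun x hx => ?_, hsp, fun h => ?_⟩
      · have := hsub hx; omega
      · have := hsub h; omega
  · rw [Finset.filter_filter]

open Finset in
private lemma card_top_small (k p : ℕ) (h : p + 1 < k) :
    ((Finset.Icc 1 (p+1)).powerset.filter
      (fun S => (∀ a ∈ S, ∀ b ∈ S, a ≠ b → k ≤ Nat.dist a b) ∧ p+1 ∈ S)).card = 1 := by
  classical
  have : ((Finset.Icc 1 (p+1)).powerset.filter
      (fun S => (∀ a ∈ S, ∀ b ∈ S, a ≠ b → k ≤ Nat.dist a b) ∧ p+1 ∈ S)) = {{p+1}} := by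
    ext S
    simp only [Finset.mem_filter, Finset.mem_powerset, Finset.mem_singleton]
    constructor
    · rintro ⟨hsub, hsp, hmem⟩
      apply Finset.eq_singleton_iff_unique_mem.2
      refine ⟨hmem, fun a ha => ?_⟩
      by_contra hne
      have := hsp a ha (p+1) hmem hne
      have ha' := Finset.mem_Icc.1 (hsub ha)
      simp only [Nat.dist] at this
      omega
    · rintro rfl
      refine ⟨by simp, fun a ha b hb hne => ?_, by simp⟩
      simp only [Finset.mem_singleton] at ha hb
      omega
  rw [this, Finset.card_singleton]

open Finset in
private lemma card_top (k p : ℕ) (hk : 1 ≤ k) (h : k ≤ p + 1) :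
    ((Finset.Icc 1 (p+1)).powerset.filter
      (fun S => (∀ a ∈ S, ∀ b ∈ S, a ≠ b → k ≤ Nat.dist a b) ∧ p+1 ∈ S)).card
    = ((Finset.Icc 1 (p+1-k)).powerset.filter
      (fun S => ∀ a ∈ S, ∀ b ∈ S, a ≠ b → k ≤ Nat.dist a b)).card := by
  classical
  apply Finset.card_nbij' (fun S => S.erase (p+1)) (fun T => insert (p+1) T)
  · intro S hS
    simp only [Finset.mem_coe, Finset.mem_filter, Finset.mem_powerset] at hS ⊢
    obtain ⟨hsub, hsp, hmem⟩ := hS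
    constructor
    · intro a ha
      have ha1 := Finset.mem_erase.1 ha
      have hd := hsp a ha1.2 (p+1) hmem ha1.1
      have := Finset.mem_Icc.1 (hsub ha1.2)
      simp only [Nat.dist] at hd
      simp only [Finset.mem_Icc]
      omega
    · intro a ha b hb hne
      exact hsp a (Finset.mem_of_mem_erase ha) b (Finset.mem_of_mem_erase hb) hne
  · intro T hT
    simp only [Finset.mem_coe, Finset.mem_filter, Finset.mem_powerset] at hT ⊢
    obtain ⟨hsub, hsp⟩ := hT
    refine ⟨?_, ?_, ?_⟩
    · intro a ha
      rcases Finset.mem_insert.1 ha with rfl | ha'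
      · simp
      · have := Finset.mem_Icc.1 (hsub ha')
        simp only [Finset.mem_Icc]
        omega
    · intro a ha b hb hne
      rcases Finset.mem_insert.1 ha with rfl | ha' <;>
        rcases Finset.mem_insert.1 hb with rfl | hb'
      · omega
      · have := Finset.mem_Icc.1 (hsub hb')
        simp only [Nat.dist]; omega
      · have := Finset.mem_Icc.1 (hsub ha')
        simp only [Nat.dist]; omega
      · exact hsp a ha' b hb' hne
    · exact Finset.mem_insert_self _ _
  · intro S hS
    simp only [Finset.mem_coe, Finset.mem_filter] at hS
    exact Finset.insert_erase hS.2.2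
  · intro T hT
    simp only [Finset.mem_coe, Finset.mem_filter, Finset.mem_powerset] at hT
    apply Finset.erase_insert
    intro hmem
    have := Finset.mem_Icc.1 (hT.1 hmem)
    omega

/-- `A_{k,p}` counts the subsets of `{1, …, p}` whose distinct elements
differ by at least `k`. -/
theorem A_eq_card_sparse_subsets (k : ℕ) (hk : 1 ≤ k) (p : ℕ) :
    A k p = ((Finset.Icc 1 p).powerset.filter
      (fun S => ∀ a ∈ S, ∀ b ∈ S, a ≠ b → k ≤ Nat.dist a b)).card := by
  induction p using Nat.strong_induction_on with
  | _ p ih =>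
    match p with
    | 0 =>
      classical
      simp [A, Finset.filter_singleton]
    | Nat.succ p =>
      rw [card_split k p, A_succ]
      by_cases h : p + 1 < k
      · rw [if_pos h, card_top_small k p h, ← ih p (Nat.lt_succ_self p),
          A_of_lt k p (by omega)]
      · rw [if_neg h, card_top k p hk (by omega), ← ih p (Nat.lt_succ_self p),
          ← ih (p + 1 - k) (by omega)]
        congr 1
        · congr 1
          omega
end

section
/- For all integers k ≥ 1 and p, j ≥ 0, F_k^j(A_{k,p}) = A_{k, p ⊖ j} and L_k^j(A_{k,p}) = A_{k, p+j}, where ⊖ denotes truncated subtraction on ℕ (a ⊖ b = max(0, a − b)) and F_k^j, L_k^j denote j-fold iterates. In particular A_{k,p} = L_k^p(1). -/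
namespace Hof

theorem A_zero (k : ℕ) : A k 0 = 1 := by rw [A]

theorem A_succ (k p : ℕ) :
    A k (p+1) = if p + 1 < k then p + 2 else A k p + A k (p + 1 - max k 1) := by
  rw [A]

theorem A_rec (k : ℕ) (hk : 1 ≤ k) {p : ℕ} (h : k ≤ p + 1) :
    A k (p+1) = A k p + A k (p + 1 - k) := by
  rw [A_succ]
  have : max k 1 = k := by omega
  rw [this, if_neg (by omega)]

theorem A_pos (k : ℕ) (p : ℕ) : 1 ≤ A k p := by
  induction p using Nat.strong_induction_on with
  | _ p ih =>
    cases p with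
    | zero => simp [A_zero]
    | succ q =>
      rw [A_succ]
      split
      · omega
      · have := ih q (by omega)
        omega

theorem A_val_le (k : ℕ) (hk : 1 ≤ k) {p : ℕ} (h : p ≤ k) : A k p = p + 1 := by
  induction p with
  | zero => exact A_zero k
  | succ q ih =>
    rw [A_succ]
    rcases Nat.lt_or_ge (q+1) k with hl | hl
    · rw [if_pos hl]
    · have hqk : q + 1 = k := by omega
      rw [if_neg (by omega), ih (by omega)]
      have : q + 1 - max k 1 = 0 := by omega
      rw [this, A_zero]

theorem A_lt_succ (k : ℕ) (p : ℕ) : A k p < A k (p+1) := by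
  rw [A_succ]
  split
  · have : A k p = p + 1 := by
      have hk : 1 ≤ k := by omega
      exact A_val_le k hk (by omega)
    omega
  · have := A_pos k (p + 1 - max k 1)
    omega

theorem A_strictMono (k : ℕ) : StrictMono (A k) :=
  strictMono_nat_of_lt_succ (A_lt_succ k)

theorem A_mono (k : ℕ) : Monotone (A k) := (A_strictMono k).monotone

theorem A_ge (k : ℕ) (p : ℕ) : p + 1 ≤ A k p := by
  induction p with
  | zero => simp [A_zero]
  | succ q ih => have := A_lt_succ k q; omega

/-- `A p = A (p-1) + A (p-k)` for all `p ≥ 1`. -/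
theorem A_sub_one_add (k : ℕ) (hk : 1 ≤ k) {p : ℕ} (h : 1 ≤ p) :
    A k (p - 1) + A k (p - k) = A k p := by
  obtain ⟨q, rfl⟩ : ∃ q, p = q + 1 := ⟨p - 1, by omega⟩
  rcases Nat.lt_or_ge (q+1) k with hl | hl
  · rw [A_val_le k hk (show q + 1 ≤ k by omega), A_val_le k hk (show q + 1 - 1 ≤ k by omega)]
    have : q + 1 - k = 0 := by omega
    rw [this, A_zero]
    omega
  · rw [A_rec k hk (by omega)]
    simp

/-- `A (p+1) = A p + A (p - (k-1))`. -/
theorem A_succ_split (k : ℕ) (hk : 1 ≤ k) (p : ℕ) :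
    A k (p + 1) = A k p + A k (p - (k - 1)) := by
  have := A_sub_one_add k hk (show 1 ≤ p + 1 by omega)
  have h1 : p + 1 - 1 = p := by omega
  have h2 : p + 1 - k = p - (k - 1) := by omega
  rw [h1, h2] at this
  omega


/-! ### Decompositions -/

def sumA (k : ℕ) (l : List ℕ) : ℕ := (l.map (A k)).sum

def Ok (k : ℕ) (l : List ℕ) : Prop := l.Pairwise (fun a b => b + k ≤ a)

theorem Ok_nil (k : ℕ) : Ok k [] := List.Pairwise.nil

theorem Ok_cons {k a : ℕ} {t : List ℕ} :
    Ok k (a :: t) ↔ (∀ b ∈ t, b + k ≤ a) ∧ Ok k t := List.pairwise_cons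

theorem Ok_append {k : ℕ} {l₁ l₂ : List ℕ} :
    Ok k (l₁ ++ l₂) ↔ Ok k l₁ ∧ Ok k l₂ ∧ ∀ x ∈ l₁, ∀ y ∈ l₂, y + k ≤ x :=
  List.pairwise_append

theorem Ok_singleton (k a : ℕ) : Ok k [a] := List.pairwise_singleton _ _

theorem sumA_nil (k : ℕ) : sumA k [] = 0 := rfl

theorem sumA_cons (k : ℕ) (p : ℕ) (l : List ℕ) : sumA k (p :: l) = A k p + sumA k l := by
  simp [sumA]

theorem sumA_append (k : ℕ) (l₁ l₂ : List ℕ) :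
    sumA k (l₁ ++ l₂) = sumA k l₁ + sumA k l₂ := by
  simp [sumA]

theorem sumA_singleton (k p : ℕ) : sumA k [p] = A k p := by simp [sumA]

theorem sumA_map_le (k : ℕ) (l : List ℕ) : sumA k (l.map (fun x => x - 1)) ≤ sumA k l := by
  induction l with
  | nil => simp [sumA]
  | cons a t ih =>
    rw [List.map_cons, sumA_cons, sumA_cons]
    have : A k (a - 1) ≤ A k a := A_mono k (by omega)
    omega

theorem sum_split (k : ℕ) (hk : 1 ≤ k) (l : List ℕ) (h : ∀ t ∈ l, 1 ≤ t) :
    sumA k (l.map (fun x => x - 1)) + sumA k (l.map (fun x => x - k)) = sumA k l := by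
  induction l with
  | nil => simp [sumA]
  | cons a t ih =>
    simp only [List.map_cons, sumA_cons]
    have h1 := A_sub_one_add k hk (h a (by simp))
    have h2 := ih (fun x hx => h x (by simp [hx]))
    omega

theorem Ok_map_sub (k : ℕ) (j : ℕ) (l : List ℕ) (hj : ∀ i ∈ l, j ≤ i) (h : Ok k l) :
    Ok k (l.map (fun x => x - j)) := by
  induction l with
  | nil => exact Ok_nil k
  | cons a t ih =>
    rw [Ok_cons] at h
    rw [List.map_cons, Ok_cons]
    constructor
    · intro b hb
      simp only [List.mem_map] at hb
      obtain ⟨x, hx, rfl⟩ := hb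
      have h1 := h.1 x hx
      have h2 := hj x (by simp [hx])
      omega
    · exact ih (fun i hi => hj i (by simp [hi])) h.2

theorem sumA_bound (k : ℕ) (hk : 1 ≤ k) (p : ℕ) (l : List ℕ) (h : Ok k (p :: l)) :
    sumA k (p :: l) < A k (p + 1) := by
  induction l generalizing p with
  | nil =>
    rw [sumA_cons, sumA_nil]
    have := A_lt_succ k p
    omega
  | cons q t ih =>
    rw [Ok_cons] at h
    have hqp : q + k ≤ p := h.1 q (by simp)
    have hq := ih q h.2
    have hs : sumA k (q :: t) = A k q + sumA k t := sumA_cons k q t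
    rw [hs] at hq
    have hmono : A k (q + 1) ≤ A k (p + 1 - k) := A_mono k (by omega)
    have hrec : A k (p + 1) = A k p + A k (p + 1 - k) := A_rec k hk (by omega)
    rw [sumA_cons, hs]
    omega

/-- largest index `p` with `A k p ≤ n` (garbage for `n = 0`). -/
def maxA (k n : ℕ) : ℕ := Nat.findGreatest (fun p => A k p ≤ n) n

theorem maxA_spec (k : ℕ) {n : ℕ} (h : 1 ≤ n) : A k (maxA k n) ≤ n := by
  have := Nat.findGreatest_spec (P := fun p => A k p ≤ n) (Nat.zero_le n)
    (by simpa [A_zero] using h)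
  exact this

theorem maxA_lt (k : ℕ) (n : ℕ) : n < A k (maxA k n + 1) := by
  by_contra hc
  push_neg at hc
  have h1 : maxA k n + 1 ≤ n := by have := A_ge k (maxA k n + 1); omega
  have := Nat.le_findGreatest (P := fun p => A k p ≤ n) h1 hc
  have : maxA k n + 1 ≤ maxA k n := this
  omega

theorem maxA_eq (k : ℕ) {p n : ℕ} (h1 : A k p ≤ n) (h2 : n < A k (p + 1)) :
    maxA k n = p := by
  have hn : 1 ≤ n := le_trans (A_pos k p) h1
  have hle : p ≤ maxA k n := Nat.le_findGreatest (by have := A_ge k p; omega) h1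
  have hge : maxA k n ≤ p := by
    by_contra hc
    push_neg at hc
    have : A k (p + 1) ≤ A k (maxA k n) := A_mono k (by omega)
    have := maxA_spec k hn
    omega
  omega

def decomp (k : ℕ) : ℕ → List ℕ
  | 0 => []
  | n + 1 => maxA k (n + 1) :: decomp k (n + 1 - A k (maxA k (n + 1)))
termination_by n => n
decreasing_by
  exact Nat.sub_lt (Nat.succ_pos _) (A_pos k _)

theorem decomp_zero (k : ℕ) : decomp k 0 = [] := by rw [decomp]

theorem decomp_succ (k n : ℕ) :
    decomp k (n + 1) = maxA k (n + 1) :: decomp k (n + 1 - A k (maxA k (n + 1))) := by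
  rw [decomp]

theorem decomp_sum (k : ℕ) (n : ℕ) : sumA k (decomp k n) = n := by
  induction n using Nat.strong_induction_on with
  | _ n ih =>
    cases n with
    | zero => simp [decomp_zero, sumA_nil]
    | succ m =>
      rw [decomp_succ, sumA_cons]
      have h1 : 1 ≤ A k (maxA k (m+1)) := A_pos k _
      have h2 : A k (maxA k (m+1)) ≤ m + 1 := maxA_spec k (by omega)
      rw [ih (m + 1 - A k (maxA k (m+1))) (by omega)]
      omega

theorem decomp_mem (k : ℕ) (n : ℕ) : ∀ x ∈ decomp k n, A k x ≤ n := by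
  induction n using Nat.strong_induction_on with
  | _ n ih =>
    cases n with
    | zero => simp [decomp_zero]
    | succ m =>
      rw [decomp_succ]
      intro x hx
      rcases List.mem_cons.1 hx with rfl | hx
      · exact maxA_spec k (by omega)
      · have h1 : 1 ≤ A k (maxA k (m+1)) := A_pos k _
        have h2 : A k (maxA k (m+1)) ≤ m + 1 := maxA_spec k (by omega)
        have := ih (m + 1 - A k (maxA k (m+1))) (by omega) x hx
        omega

theorem decomp_ok (k : ℕ) (hk : 1 ≤ k) (n : ℕ) : Ok k (decomp k n) := by
  induction n using Nat.strong_induction_on with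
  | _ n ih =>
    cases n with
    | zero => rw [decomp_zero]; exact Ok_nil k
    | succ m =>
      rw [decomp_succ, Ok_cons]
      set p := maxA k (m+1) with hp
      have h1 : 1 ≤ A k p := A_pos k _
      have h2 : A k p ≤ m + 1 := maxA_spec k (by omega)
      have h3 : m + 1 < A k (p + 1) := maxA_lt k (m+1)
      refine ⟨?_, ih _ (by omega)⟩
      intro x hx
      have hxle : A k x ≤ m + 1 - A k p := decomp_mem k _ x hx
      rcases Nat.lt_or_ge (p + 1) k with hl | hl
      · -- then A (p+1) = A p + 1, so the remainder is 0 and decomp is empty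
        have : A k (p+1) = p + 2 := A_val_le k hk (by omega)
        have hap : A k p = p + 1 := A_val_le k hk (by omega)
        have : m + 1 - A k p = 0 := by omega
        rw [this, decomp_zero] at hx
        simp at hx
      · have hrec : A k (p + 1) = A k p + A k (p + 1 - k) := A_rec k hk (by omega)
        have hxlt : A k x < A k (p + 1 - k) := by omega
        have : x < p + 1 - k := by
          by_contra hc
          push_neg at hc
          have := A_mono k hc
          omega
        omega

theorem decomp_unique (k : ℕ) (hk : 1 ≤ k) (l : List ℕ) (h : Ok k l) :
    decomp k (sumA k l) = l := by
  induction l with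
  | nil => simp [sumA_nil, decomp_zero]
  | cons p t ih =>
    have hbound : sumA k (p :: t) < A k (p + 1) := sumA_bound k hk p t h
    rw [Ok_cons] at h
    have hap : A k p ≤ sumA k (p :: t) := by rw [sumA_cons]; omega
    have hmax : maxA k (sumA k (p :: t)) = p := maxA_eq k hap hbound
    have hpos : 1 ≤ sumA k (p :: t) := le_trans (A_pos k p) hap
    obtain ⟨m, hm⟩ : ∃ m, sumA k (p :: t) = m + 1 := ⟨sumA k (p :: t) - 1, by omega⟩
    rw [hm, decomp_succ, ← hm, hmax]
    have : sumA k (p :: t) - A k p = sumA k t := by rw [sumA_cons]; omega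
    rw [this, ih h.2]

/-! ### The shift function -/

def sh (k n : ℕ) : ℕ := sumA k ((decomp k n).map (fun x => x - 1))

theorem sh_zero (k : ℕ) : sh k 0 = 0 := by simp [sh, decomp_zero, sumA_nil]

theorem sh_eq (k : ℕ) (hk : 1 ≤ k) (l : List ℕ) (h : Ok k l) :
    sh k (sumA k l) = sumA k (l.map (fun x => x - 1)) := by
  rw [sh, decomp_unique k hk l h]

theorem sh_le (k : ℕ) (n : ℕ) : sh k n ≤ n := by
  have := sumA_map_le k (decomp k n)
  rw [decomp_sum] at this
  exact this

/-! ### Chains: `A (m+1) - 1 = A m + A (m-k) + A (m-2k) + ...` -/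

def chain (k : ℕ) : ℕ → List ℕ
  | 0 => [0]
  | m + 1 => if m + 1 < k then [m + 1] else (m + 1) :: chain k (m + 1 - max k 1)
termination_by m => m
decreasing_by omega

theorem chain_zero (k : ℕ) : chain k 0 = [0] := by rw [chain]

theorem chain_succ (k m : ℕ) :
    chain k (m+1) = if m + 1 < k then [m + 1] else (m + 1) :: chain k (m + 1 - max k 1) := by
  rw [chain]

theorem chain_low (k : ℕ) {m : ℕ} (h : m < k) : chain k m = [m] := by
  cases m with
  | zero =>
    rw [chain_zero]
  | succ q => rw [chain_succ, if_pos h]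

theorem chain_high (k : ℕ) (hk : 1 ≤ k) {m : ℕ} (h : k ≤ m) :
    chain k m = m :: chain k (m - k) := by
  obtain ⟨q, rfl⟩ : ∃ q, m = q + 1 := ⟨m - 1, by omega⟩
  rw [chain_succ, if_neg (by omega)]
  have : max k 1 = k := by omega
  rw [this]

theorem chain_mem (k : ℕ) (hk : 1 ≤ k) (m : ℕ) : ∀ x ∈ chain k m, x ≤ m := by
  induction m using Nat.strong_induction_on with
  | _ m ih =>
    rcases Nat.lt_or_ge m k with hl | hl
    · rw [chain_low k hl]; simp
    · rw [chain_high k hk hl]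
      intro x hx
      rcases List.mem_cons.1 hx with rfl | hx
      · omega
      · have := ih (m - k) (by omega) x hx
        omega

theorem chain_ok (k : ℕ) (hk : 1 ≤ k) (m : ℕ) : Ok k (chain k m) := by
  induction m using Nat.strong_induction_on with
  | _ m ih =>
    rcases Nat.lt_or_ge m k with hl | hl
    · rw [chain_low k hl]; exact Ok_singleton k m
    · rw [chain_high k hk hl, Ok_cons]
      refine ⟨?_, ih (m - k) (by omega)⟩
      intro b hb
      have := chain_mem k hk (m - k) b hb
      omega

theorem chain_sum (k : ℕ) (hk : 1 ≤ k) (m : ℕ) : sumA k (chain k m) + 1 = A k (m + 1) := by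
  induction m using Nat.strong_induction_on with
  | _ m ih =>
    rcases Nat.lt_or_ge m k with hl | hl
    · rw [chain_low k hl, sumA_singleton, A_val_le k hk (show m ≤ k by omega),
        A_val_le k hk (show m + 1 ≤ k by omega)]
    · rw [chain_high k hk hl, sumA_cons]
      have hih := ih (m - k) (by omega)
      have h1 : m - k + 1 = m + 1 - k := by omega
      rw [h1] at hih
      have hrec : A k (m + 1) = A k m + A k (m + 1 - k) := A_rec k hk (by omega)
      omega

theorem map_pred_chain (k : ℕ) (hk : 1 ≤ k) {m : ℕ} (h : 1 ≤ m % k) :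
    (chain k m).map (fun x => x - 1) = chain k (m - 1) := by
  induction m using Nat.strong_induction_on with
  | _ m ih =>
    have hm1 : 1 ≤ m := by
      rcases Nat.eq_zero_or_pos m with rfl | h'
      · simp at h
      · exact h'
    rcases Nat.lt_or_ge m k with hl | hl
    · rw [chain_low k hl, List.map_singleton, chain_low k (show m - 1 < k by omega)]
    · have hmk : k < m := by
        rcases Nat.lt_or_ge k m with h' | h'
        · exact h'
        · have : m = k := by omega
          rw [this] at h
          simp [Nat.mod_self] at h
      rw [chain_high k hk hl, List.map_cons]
      have hmod : (m - k) % k = m % k := by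
        conv_rhs => rw [show m = (m - k) + k by omega]
        rw [Nat.add_mod_right]
      have hih := ih (m - k) (by omega) (by rw [hmod]; exact h)
      have hidx : m - k - 1 = m - 1 - k := by omega
      rw [hih, hidx, chain_high k hk (show k ≤ m - 1 by omega)]

theorem map_pred_chain0_sum (k : ℕ) (hk : 1 ≤ k) {m : ℕ} (h : m % k = 0) :
    sumA k ((chain k m).map (fun x => x - 1)) = A k m := by
  induction m using Nat.strong_induction_on with
  | _ m ih =>
    rcases Nat.eq_zero_or_pos m with rfl | hm
    · rw [chain_zero]
      simp [sumA_singleton, A_zero]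
    · have hl : k ≤ m := by
        by_contra hc
        push_neg at hc
        rw [Nat.mod_eq_of_lt hc] at h
        omega
      rw [chain_high k hk hl, List.map_cons, sumA_cons]
      have hmod : (m - k) % k = 0 := by
        have : m = (m - k) + k := by omega
        rw [this, Nat.add_mod_right] at h
        exact h
      rw [ih (m - k) (by omega) hmod]
      have := A_sub_one_add k hk hm
      have hmk : m - k = m - k := rfl
      omega

/-! ### Shift lemmas for `sh` -/

theorem Ok_concat_of (k : ℕ) {l : List ℕ} {c : ℕ} (h : Ok k l) (hc : ∀ x ∈ l, c + k ≤ x) :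
    Ok k (l ++ [c]) :=
  Ok_append.2 ⟨h, Ok_singleton k c, fun x hx y hy => by
    rcases List.mem_singleton.1 hy with rfl
    exact hc x hx⟩

/-- renormalisation lemma: adding `A c` below a decomposition whose entries are all
`≥ c + k - 1` behaves well under `sh`. -/
theorem SH2 (k : ℕ) (hk : 1 ≤ k) (l : List ℕ) (c : ℕ) (hOk : Ok k l)
    (hel : ∀ i ∈ l, 1 ≤ i ∧ c + k - 1 ≤ i) :
    sh k (sumA k l + A k c) = sumA k (l.map (fun x => x - 1)) + A k (c - 1) := by
  induction l using List.reverseRecOn generalizing c with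
  | nil =>
    have h0 : sumA k [c] = A k c := sumA_singleton k c
    have := sh_eq k hk [c] (Ok_singleton k c)
    rw [h0] at this
    simpa [sumA_nil, sumA_singleton] using this
  | append_singleton l m ihl =>
    obtain ⟨hOkl, _, hcross⟩ := Ok_append.1 hOk
    have hcross' : ∀ x ∈ l, m + k ≤ x := fun x hx =>
      hcross x hx m (by simp)
    have hm : 1 ≤ m ∧ c + k - 1 ≤ m := hel m (by simp)
    rcases Nat.lt_or_ge m (c + k) with hcase | hcase
    · -- m = c + k - 1 : merge `A m + A c = A (m+1)` and recurse
      have hmeq : m = c + k - 1 := by omega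
      have hmerge : A k m + A k c = A k (m + 1) := by
        have := A_sub_one_add k hk (show 1 ≤ m + 1 by omega)
        have h1 : m + 1 - 1 = m := by omega
        have h2 : m + 1 - k = c := by omega
        rw [h1, h2] at this
        omega
      have hihl := ihl (m + 1) hOkl (fun i hi => by
        have h1 := hcross' i hi
        constructor <;> omega)
      rw [sumA_append, sumA_singleton]
      have hre : sumA k l + A k m + A k c = sumA k l + A k (m + 1) := by omega
      rw [hre, hihl]
      have hgoal : A k m = A k (m - 1) + A k (c - 1) := by
        rcases Nat.eq_zero_or_pos c with rfl | hc
        · -- m = k - 1, linear regime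
          have hk2 : 2 ≤ k := by omega
          rw [A_val_le k hk (show m ≤ k by omega), A_val_le k hk (show m - 1 ≤ k by omega),
            A_zero]
          omega
        · have := A_sub_one_add k hk (show 1 ≤ m by omega)
          have h2 : m - k = c - 1 := by omega
          rw [h2] at this
          omega
      simp [sumA_append, sumA_singleton]
      omega
    · -- clean case : `l ++ [m, c]` is canonical
      have hOk2 : Ok k ((l ++ [m]) ++ [c]) := by
        refine Ok_concat_of k hOk ?_
        intro x hx
        rcases List.mem_append.1 hx with hx | hx
        · have := hcross' x hx
          omega
        · rcases List.mem_singleton.1 hx with rfl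
          omega
      have := sh_eq k hk ((l ++ [m]) ++ [c]) hOk2
      rw [sumA_append (k := k) (l ++ [m]) [c], sumA_singleton] at this
      rw [this, List.map_append, sumA_append]
      simp [sumA_singleton]

/-- adding a "stuck" `A 0 = 1` below a decomposition with positive entries. -/
theorem SH0x (k : ℕ) (hk : 1 ≤ k) (l : List ℕ) (hOk : Ok k l)
    (hel : ∀ i ∈ l, 1 ≤ i) :
    sh k (sumA k l + 1) = sumA k (l.map (fun x => x - 1)) + 1 := by
  cases l using List.reverseRecOn with
  | nil =>
    have h1 : (1 : ℕ) = sumA k [0] := by simp [sumA_singleton, A_zero]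
    rw [show sumA k [] + 1 = sumA k [0] by simp [sumA_nil, sumA_singleton, A_zero]]
    rw [sh_eq k hk [0] (Ok_singleton k 0)]
    simp [sumA_nil, sumA_singleton, A_zero]
  | append_singleton l m =>
    obtain ⟨hOkl, _, hcross⟩ := Ok_append.1 hOk
    have hcross' : ∀ x ∈ l, m + k ≤ x := fun x hx => hcross x hx m (by simp)
    have hm : 1 ≤ m := hel m (by simp)
    rcases Nat.lt_or_ge m k with hcase | hcase
    · -- 1 ≤ m < k : A m + 1 = A (m+1), then SH2
      have hmerge : A k m + 1 = A k (m + 1) := by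
        rw [A_val_le k hk (show m ≤ k by omega), A_val_le k hk (show m + 1 ≤ k by omega)]
      have hsh2 := SH2 k hk l (m + 1) hOkl (fun i hi => by
        have := hcross' i hi
        constructor <;> omega)
      rw [sumA_append, sumA_singleton]
      have hre : sumA k l + A k m + 1 = sumA k l + A k (m + 1) := by omega
      rw [hre, hsh2]
      have h3 : A k m = A k (m - 1) + 1 := by
        rw [A_val_le k hk (show m ≤ k by omega), A_val_le k hk (show m - 1 ≤ k by omega)]
        omega
      simp [List.map_append, sumA_append, sumA_singleton]
      omega
    · -- clean : l ++ [m, 0]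
      have hOk2 : Ok k ((l ++ [m]) ++ [0]) := by
        refine Ok_concat_of k hOk ?_
        intro x hx
        rcases List.mem_append.1 hx with hx | hx
        · have := hcross' x hx
          omega
        · rcases List.mem_singleton.1 hx with rfl
          omega
      have := sh_eq k hk ((l ++ [m]) ++ [0]) hOk2
      rw [sumA_append (k := k) (l ++ [m]) [0], sumA_singleton, A_zero] at this
      rw [this, List.map_append, sumA_append]
      simp [sumA_singleton, A_zero]

theorem SHIFT (k : ℕ) (hk : 1 ≤ k) (j : ℕ) :
    ∀ l : List ℕ, Ok k l → (∀ i ∈ l, j ≤ i) →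
    (sh k)^[j] (sumA k l) = sumA k (l.map (fun x => x - j)) := by
  induction j with
  | zero =>
    intro l _ _
    simp
  | succ j ih =>
    intro l hOk hel
    rw [Function.iterate_succ_apply, sh_eq k hk l hOk]
    have h1 := ih (l.map (fun x => x - 1)) (Ok_map_sub k 1 l (fun i hi => by
        have := hel i hi; omega) hOk)
      (fun i hi => by
        simp only [List.mem_map] at hi
        obtain ⟨x, hx, rfl⟩ := hi
        have := hel x hx
        omega)
    rw [h1, List.map_map]
    have heq : List.map ((fun x => x - j) ∘ fun x => x - 1) l
        = List.map (fun x => x - (j + 1)) l :=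
      List.map_congr_left (fun x _ => by simp only [Function.comp_apply]; omega)
    rw [heq]

/-! ### Iterating `sh` on `n - 1` -/

theorem CHAIN (k : ℕ) (hk : 1 ≤ k) (R : List ℕ) (s : ℕ) (hs : 1 ≤ s)
    (hOk : Ok k (R ++ [s])) :
    ∀ j, j ≤ k →
      (sh k)^[j] (sumA k R + (A k s - 1)) =
        sumA k (R.map (fun x => x - j)) +
          (if j ≤ (s - 1) % k then A k (s - j) - 1 else A k (s - j)) := by
  obtain ⟨hOkR, -, hcross⟩ := Ok_append.1 hOk
  have hcrossR : ∀ x ∈ R, s + k ≤ x := fun x hx => hcross x hx s (by simp)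
  intro j
  induction j with
  | zero =>
    intro _
    rw [if_pos (Nat.zero_le _)]
    simp
  | succ j ihj =>
    intro hjk
    have hj := ihj (by omega)
    rw [Function.iterate_succ_apply', hj]
    set r := (s - 1) % k with hr
    have hrk : r < k := Nat.mod_lt _ (by omega)
    have hrs : r ≤ s - 1 := Nat.mod_le _ _
    by_cases hc1 : j ≤ r
    · -- the bottom is still a chain `chain k (s-1-j)`
      rw [if_pos hc1]
      have hjs : j ≤ s - 1 := le_trans hc1 hrs
      set m := s - 1 - j with hm
      have hsum : A k (s - j) - 1 = sumA k (chain k m) := by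
        have := chain_sum k hk m
        have h1 : m + 1 = s - j := by omega
        rw [h1] at this
        omega
      have hOkc : Ok k (R.map (fun x => x - j) ++ chain k m) := by
        rw [Ok_append]
        refine ⟨Ok_map_sub k j R (fun i hi => by have := hcrossR i hi; omega) hOkR,
          chain_ok k hk m, ?_⟩
        intro x hx y hy
        simp only [List.mem_map] at hx
        obtain ⟨t, ht, rfl⟩ := hx
        have h1 := hcrossR t ht
        have h2 := chain_mem k hk m y hy
        omega
      have heq : sumA k (R.map (fun x => x - j)) + (A k (s - j) - 1) =
          sumA k (R.map (fun x => x - j) ++ chain k m) := by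
        rw [sumA_append, hsum]
      rw [heq, sh_eq k hk _ hOkc, List.map_append, sumA_append, List.map_map]
      have hmapR : List.map ((fun x => x - 1) ∘ fun x => x - j) R
          = List.map (fun x => x - (j + 1)) R :=
        List.map_congr_left (fun x _ => by simp only [Function.comp_apply]; omega)
      rw [hmapR]
      have hmmod : m % k = r - j := by
        have hd := Nat.div_add_mod (s - 1) k
        have h2 : m = k * ((s - 1) / k) + (r - j) := by omega
        rw [h2, Nat.mul_add_mod]
        exact Nat.mod_eq_of_lt (by omega)
      by_cases hc2 : j + 1 ≤ r
      · -- chain shifts to `chain k (m-1)`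
        rw [if_pos hc2, map_pred_chain k hk (by omega)]
        have := chain_sum k hk (m - 1)
        have h1 : m - 1 + 1 = s - (j + 1) := by omega
        rw [h1] at this
        omega
      · -- j = r : the chain collapses to the single value `A k (s - (j+1))`
        have hjr : j = r := by omega
        rw [if_neg hc2]
        have h0 : m % k = 0 := by omega
        rw [map_pred_chain0_sum k hk h0]
        have h1 : m = s - (j + 1) := by omega
        rw [h1]
    · -- j > r : bottom has collapsed already
      rw [if_neg hc1]
      by_cases hc3 : j + 1 ≤ s
      · -- bottom is `A (s - j)` with `s - j ≥ 1` : clean shift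
        have hOkc : Ok k (R.map (fun x => x - j) ++ [s - j]) := by
          refine Ok_concat_of k
            (Ok_map_sub k j R (fun i hi => by have := hcrossR i hi; omega) hOkR) ?_
          intro x hx
          simp only [List.mem_map] at hx
          obtain ⟨t, ht, rfl⟩ := hx
          have := hcrossR t ht
          omega
        have heq : sumA k (R.map (fun x => x - j)) + A k (s - j) =
            sumA k (R.map (fun x => x - j) ++ [s - j]) := by
          rw [sumA_append, sumA_singleton]
        rw [heq, sh_eq k hk _ hOkc, List.map_append, sumA_append, List.map_map]
        have hmapR : List.map ((fun x => x - 1) ∘ fun x => x - j) R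
            = List.map (fun x => x - (j + 1)) R :=
          List.map_congr_left (fun x _ => by simp only [Function.comp_apply]; omega)
        rw [hmapR, if_neg (by omega)]
        simp only [List.map_singleton, sumA_singleton]
        have : s - j - 1 = s - (j + 1) := by omega
        rw [this]
      · -- j ≥ s : bottom is the stuck `A 0 = 1`
        have hsj : s - j = 0 := by omega
        have hsj1 : s - (j + 1) = 0 := by omega
        rw [hsj, if_neg (by omega), hsj1, A_zero]
        have hOkm : Ok k (R.map (fun x => x - j)) :=
          Ok_map_sub k j R (fun i hi => by have := hcrossR i hi; omega) hOkR
        have hel : ∀ i ∈ R.map (fun x => x - j), 1 ≤ i := by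
          intro i hi
          simp only [List.mem_map] at hi
          obtain ⟨t, ht, rfl⟩ := hi
          have := hcrossR t ht
          omega
        rw [SH0x k hk _ hOkm hel, List.map_map]
        have hmapR : List.map ((fun x => x - 1) ∘ fun x => x - j) R
            = List.map (fun x => x - (j + 1)) R :=
          List.map_congr_left (fun x _ => by simp only [Function.comp_apply]; omega)
        rw [hmapR]

/-- The key identity: `sh n + sh^[k] (n-1) = n`. -/
theorem CORE (k : ℕ) (hk : 1 ≤ k) (n : ℕ) (hn : 1 ≤ n) :
    sh k n + (sh k)^[k] (n - 1) = n := by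
  rcases List.eq_nil_or_concat (decomp k n) with hnil | ⟨R, s, hRs⟩ <;>
    [skip; rw [List.concat_eq_append] at hRs]
  · exfalso
    have := decomp_sum k n
    rw [hnil, sumA_nil] at this
    omega
  · have hsum : sumA k (R ++ [s]) = n := by rw [← hRs, decomp_sum]
    have hOk : Ok k (R ++ [s]) := by rw [← hRs]; exact decomp_ok k hk n
    obtain ⟨hOkR, -, hcross⟩ := Ok_append.1 hOk
    have hcrossR : ∀ x ∈ R, s + k ≤ x := fun x hx => hcross x hx s (by simp)
    have hshn : sh k n = sumA k (R.map (fun x => x - 1)) + A k (s - 1) := by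
      rw [sh, hRs, List.map_append, sumA_append, List.map_singleton, sumA_singleton]
    rw [sumA_append, sumA_singleton] at hsum
    have hsplit := sum_split k hk R (fun t ht => by have := hcrossR t ht; omega)
    rcases Nat.eq_zero_or_pos s with rfl | hs
    · -- bottom index 0 : `n - 1 = sumA R`
      rw [A_zero] at hsum
      have hn1 : n - 1 = sumA k R := by omega
      have hshift := SHIFT k hk k R hOkR (fun i hi => by have := hcrossR i hi; omega)
      rw [hn1, hshift, hshn]
      have h0 : A k (0 - 1) = 1 := A_zero k
      omega
    · -- bottom index `s ≥ 1`
      have hn1 : n - 1 = sumA k R + (A k s - 1) := by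
        have := A_pos k s
        omega
      have hchain := CHAIN k hk R s hs hOk k (le_refl k)
      rw [if_neg (by have := Nat.mod_lt (s-1) (show 0 < k by omega); omega)] at hchain
      rw [hn1, hchain, hshn]
      have hbot : A k (s - 1) + A k (s - k) = A k s := A_sub_one_add k hk hs
      omega

/-! ### The Hofstadter function equals `sh` -/

theorem Fa_le (k : ℕ) : ∀ fuel n, Fa k fuel n ≤ n := by
  intro fuel n
  cases fuel with
  | zero => rw [Fa]; omega
  | succ f =>
    cases n with
    | zero => rw [Fa]
    | succ m => rw [Fa]; omega

theorem Fa_congr (k : ℕ) : ∀ n f₁ f₂, n ≤ f₁ → n ≤ f₂ → Fa k f₁ n = Fa k f₂ n := by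
  intro n
  induction n using Nat.strong_induction_on with
  | _ n ih =>
    intro f₁ f₂ h₁ h₂
    cases n with
    | zero =>
      cases f₁ with
      | zero => cases f₂ with
        | zero => rfl
        | succ g₂ => rw [Fa, Fa]
      | succ g₁ => cases f₂ with
        | zero => rw [Fa, Fa]
        | succ g₂ => rw [Fa, Fa]
    | succ m =>
      obtain ⟨g₁, rfl⟩ : ∃ g, f₁ = g + 1 := ⟨f₁ - 1, by omega⟩
      obtain ⟨g₂, rfl⟩ : ∃ g, f₂ = g + 1 := ⟨f₂ - 1, by omega⟩
      rw [Fa, Fa]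
      have key : ∀ j, (Fa k g₁)^[j] m = (Fa k g₂)^[j] m ∧ (Fa k g₁)^[j] m ≤ m := by
        intro j
        induction j with
        | zero => exact ⟨rfl, le_refl m⟩
        | succ i ihi =>
          rw [Function.iterate_succ_apply', Function.iterate_succ_apply', ihi.1]
          set x := (Fa k g₂)^[i] m with hx
          have hxm : x ≤ m := ihi.1 ▸ ihi.2
          constructor
          · exact ih x (by omega) g₁ g₂ (by omega) (by omega)
          · have := Fa_le k g₁ x
            have h2 := ih x (by omega) g₁ g₂ (by omega) (by omega)
            omega
      rw [(key k).1]

theorem F_le (k n : ℕ) : F k n ≤ n := Fa_le k n n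

theorem F_succ (k : ℕ) (n : ℕ) : F k (n + 1) = (n + 1) - (F k)^[k] n := by
  have h0 : F k (n+1) = (n+1) - (Fa k n)^[k] n := by rw [F, Fa]
  have key : ∀ j, (Fa k n)^[j] n = (F k)^[j] n ∧ (F k)^[j] n ≤ n := by
    intro j
    induction j with
    | zero => exact ⟨rfl, le_refl n⟩
    | succ i ihi =>
      rw [Function.iterate_succ_apply', Function.iterate_succ_apply', ihi.1]
      set x := (F k)^[i] n with hx
      have hxm : x ≤ n := ihi.2
      have h1 : Fa k n x = Fa k x x := Fa_congr k x n x hxm (le_refl x)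
      constructor
      · rw [h1]; rfl
      · have := Fa_le k x x
        have : F k x ≤ x := this
        omega
  rw [h0, (key k).1]

theorem F_eq_sh (k : ℕ) (hk : 1 ≤ k) (n : ℕ) : F k n = sh k n := by
  induction n using Nat.strong_induction_on with
  | _ n ih =>
    cases n with
    | zero =>
      rw [sh_zero]
      rfl
    | succ m =>
      rw [F_succ]
      have key : ∀ j, (F k)^[j] m = (sh k)^[j] m ∧ (sh k)^[j] m ≤ m := by
        intro j
        induction j with
        | zero => exact ⟨rfl, le_refl m⟩
        | succ i ihi =>
          rw [Function.iterate_succ_apply', Function.iterate_succ_apply', ihi.1]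
          set x := (sh k)^[i] m with hx
          have hxm : x ≤ m := ihi.2
          refine ⟨ih x (by omega), ?_⟩
          have := sh_le k x
          omega
      rw [(key k).1]
      have hcore := CORE k hk (m + 1) (by omega)
      have h1 : m + 1 - 1 = m := by omega
      rw [h1] at hcore
      have := (key k).2
      omega

theorem F_A (k : ℕ) (hk : 1 ≤ k) (p : ℕ) : F k (A k p) = A k (p - 1) := by
  rw [F_eq_sh k hk]
  have h1 : A k p = sumA k [p] := (sumA_singleton k p).symm
  rw [h1, sh_eq k hk [p] (Ok_singleton k p), List.map_singleton, sumA_singleton]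

theorem F_iter_A (k : ℕ) (hk : 1 ≤ k) (p j : ℕ) : (F k)^[j] (A k p) = A k (p - j) := by
  induction j with
  | zero => simp
  | succ i ih =>
    rw [Function.iterate_succ_apply', ih, F_A k hk]
    have : p - i - 1 = p - (i + 1) := by omega
    rw [this]

theorem L_A (k : ℕ) (hk : 1 ≤ k) (p : ℕ) : L k (A k p) = A k (p + 1) := by
  rw [L, F_iter_A k hk p (k-1), A_succ_split k hk p]

theorem L_iter_A (k : ℕ) (hk : 1 ≤ k) (p j : ℕ) : (L k)^[j] (A k p) = A k (p + j) := by
  induction j with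
  | zero => simp
  | succ i ih =>
    rw [Function.iterate_succ_apply', ih, L_A k hk]
    have : p + i + 1 = p + (i + 1) := by omega
    rw [this]

end Hof

/-- `F_k^j (A_{k,p}) = A_{k, p ⊖ j}`, `L_k^j (A_{k,p}) = A_{k, p+j}`, and in
particular `A_{k,p} = L_k^p 1`. -/
theorem F_L_iterate_on_A (k : ℕ) (hk : 1 ≤ k) (p j : ℕ) :
    (F k)^[j] (A k p) = A k (p - j) ∧
    (L k)^[j] (A k p) = A k (p + j) ∧
    A k p = (L k)^[p] 1 := by
  refine ⟨Hof.F_iter_A k hk p j, Hof.L_iter_A k hk p j, ?_⟩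
  have h := Hof.L_iter_A k hk 0 p
  rw [show A k 0 = 1 from Hof.A_zero k, Nat.zero_add] at h
  exact h.symm
end

section
/- For every integer k ≥ 1, every 1 ≤ q ≤ k and every n ≥ 0, F_k^q(n) = Σ_{p ∈ D_k(n)} A_{k, p ⊖ q}, where ⊖ is truncated subtraction on ℕ and F_k^q is the q-fold iterate. In particular F_k(n) = Σ_{p ∈ D_k(n)} A_{k, p ⊖ 1}. -/
/-- `D` is a canonical `k`-decomposition of `n` : distinct elements are at
distance at least `k`, and the corresponding `A`-numbers sum to `n`. -/
def IsCanonDecomp (k n : ℕ) (D : Finset ℕ) : Prop :=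
  (∀ p ∈ D, ∀ q ∈ D, p ≠ q → k ≤ Nat.dist p q) ∧ ∑ p ∈ D, A k p = n

namespace HofstadterAux

lemma distdef (a b : ℕ) : Nat.dist a b = a - b + (b - a) := rfl

lemma A_pos (k p : ℕ) : 1 ≤ A k p := by
  induction p using Nat.strong_induction_on with
  | _ p ih =>
    cases p with
    | zero => simp [A]
    | succ m =>
      rw [A]
      split
      · omega
      · have := ih m (by omega)
        omega

lemma A_small (k p : ℕ) (h : p < k) : A k p = p + 1 := by
  cases p with
  | zero => simp [A]
  | succ m => rw [A, if_pos h]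

lemma A_rec' (k : ℕ) (hk : 1 ≤ k) (p : ℕ) (hp : 1 ≤ p) :
    A k (p - 1) + A k (p - k) = A k p := by
  obtain ⟨m, rfl⟩ : ∃ m, p = m + 1 := ⟨p - 1, by omega⟩
  rw [A]
  split
  · rename_i h
    have h1 : A k m = m + 1 := A_small k m (by omega)
    have h2 : m + 1 - 1 = m := by omega
    have h3 : m + 1 - k = 0 := by omega
    rw [h2, h3, h1]
    simp [A]
  · have hmax : max k 1 = k := by omega
    rw [hmax]
    simp

lemma Fa_le (k fuel n : ℕ) : Fa k fuel n ≤ n := by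
  cases fuel with
  | zero => simp [Fa]
  | succ f => cases n with
    | zero => simp [Fa]
    | succ m => rw [Fa]; omega

lemma Fa_eq (k : ℕ) : ∀ n fuel, n ≤ fuel → Fa k fuel n = F k n := by
  intro n
  induction n using Nat.strong_induction_on with
  | _ n ih =>
    intro fuel hf
    cases n with
    | zero => cases fuel <;> rfl
    | succ m =>
      obtain ⟨f, rfl⟩ : ∃ f, fuel = f + 1 := ⟨fuel - 1, by omega⟩
      show Fa k (f+1) (m+1) = Fa k (m+1) (m+1)
      rw [Fa, Fa]
      have key : ∀ j x, x ≤ m → (Fa k f)^[j] x = (Fa k m)^[j] x := by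
        intro j
        induction j with
        | zero => simp
        | succ j ihj =>
          intro x hx
          rw [Function.iterate_succ_apply, Function.iterate_succ_apply]
          have h1 : Fa k f x = Fa k m x := by
            rw [ih x (by omega) f (by omega), ih x (by omega) m hx]
          rw [h1]
          exact ihj _ (le_trans (Fa_le k m x) hx)
      rw [key k m (le_refl m)]

lemma F_le (k n : ℕ) : F k n ≤ n := Fa_le k n n

lemma F_succ (k n : ℕ) : F k (n + 1) = (n + 1) - (F k)^[k] n := by
  show Fa k (n+1) (n+1) = _
  rw [Fa]
  congr 1
  have key : ∀ j x, x ≤ n → (Fa k n)^[j] x = (F k)^[j] x := by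
    intro j
    induction j with
    | zero => simp
    | succ j ihj =>
      intro x hx
      rw [Function.iterate_succ_apply, Function.iterate_succ_apply]
      rw [Fa_eq k x n hx]
      exact ihj _ (le_trans (F_le k x) hx)
  exact key k n (le_refl n)

lemma F_iter_le (k j n : ℕ) : (F k)^[j] n ≤ n := by
  induction j with
  | zero => simp
  | succ j ihj =>
    rw [Function.iterate_succ_apply']
    exact le_trans (F_le k _) ihj

def chain (k : ℕ) : ℕ → Finset ℕ
  | 0 => ∅
  | p + 1 => insert p (chain k (p + 1 - max k 1))
termination_by p => p
decreasing_by all_goals omega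

lemma chain_lt (k : ℕ) : ∀ p, ∀ c ∈ chain k p, c < p := by
  intro p
  induction p using Nat.strong_induction_on with
  | _ p ih =>
    cases p with
    | zero => simp [chain]
    | succ m =>
      intro c hc
      rw [chain, Finset.mem_insert] at hc
      rcases hc with rfl | hc
      · omega
      · have := ih (m + 1 - max k 1) (by omega) c hc
        omega

lemma chain_gaps (k : ℕ) (hk : 1 ≤ k) :
    ∀ p, ∀ c ∈ chain k p, ∀ c' ∈ chain k p, c < c' → c + k ≤ c' := by
  intro p
  induction p using Nat.strong_induction_on with
  | _ p ih =>
    cases p with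
    | zero => simp [chain]
    | succ m =>
      intro c hc c' hc' hlt
      rw [chain, Finset.mem_insert] at hc hc'
      rcases hc with rfl | hc <;> rcases hc' with rfl | hc'
      · omega
      · have := chain_lt k _ c' hc'; omega
      · have := chain_lt k _ c hc; omega
      · exact ih (m + 1 - max k 1) (by omega) c hc c' hc' hlt

lemma chain_sum (k : ℕ) (hk : 1 ≤ k) :
    ∀ p, ∑ c ∈ chain k p, A k c + 1 = A k p := by
  intro p
  induction p using Nat.strong_induction_on with
  | _ p ih =>
    cases p with
    | zero => simp [chain, A]
    | succ m =>
      rw [chain]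
      have hnotmem : m ∉ chain k (m + 1 - max k 1) := by
        intro h
        have := chain_lt k _ m h
        omega
      rw [Finset.sum_insert hnotmem]
      have hIH := ih (m + 1 - max k 1) (by omega)
      have hrec := A_rec' k hk (m + 1) (by omega)
      have hm : max k 1 = k := by omega
      simp only [Nat.add_sub_cancel] at hrec
      rw [hm] at hIH ⊢
      omega

lemma chain_sumK (k : ℕ) (hk : 1 ≤ k) :
    ∀ p, (∑ c ∈ chain k p, A k (c - k)) + A k (p - 1) = A k p := by
  intro p
  induction p using Nat.strong_induction_on with
  | _ p ih =>
    cases p with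
    | zero => simp [chain]
    | succ m =>
      rw [chain]
      have hnotmem : m ∉ chain k (m + 1 - max k 1) := by
        intro h
        have := chain_lt k _ m h
        omega
      rw [Finset.sum_insert hnotmem]
      have hIH := ih (m + 1 - max k 1) (by omega)
      have hrec := A_rec' k hk (m + 1) (by omega)
      have hm : max k 1 = k := by omega
      rw [hm] at hIH hnotmem ⊢
      have hidx : m + 1 - k - 1 = m - k := by omega
      rw [hidx] at hIH
      simp only [Nat.add_sub_cancel] at hrec ⊢
      omega

def Adm (k : ℕ) (E : Finset ℕ) : Prop :=
  ∀ p ∈ E, ∀ q ∈ E, p < q → (1 ≤ p → p + k ≤ q + 1) ∧ (∀ r ∈ E, r < p → p + k ≤ q)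

theorem Fmain (k : ℕ) (hk : 1 ≤ k) :
    ∀ n, ∀ D : Finset ℕ, IsCanonDecomp k n D → ∀ q, 1 ≤ q → q ≤ k →
      (F k)^[q] n = ∑ p ∈ D, A k (p - q) := by
  intro n
  induction n using Nat.strong_induction_on with
  | _ n IH =>
    have onestep : ∀ m ≤ n, ∀ E : Finset ℕ, Adm k E → ∑ p ∈ E, A k p = m →
        F k m = ∑ p ∈ E, A k (p - 1) := by
      intro m hm E hE hsum
      rcases E.eq_empty_or_nonempty with rfl | hne
      · simp at hsum
        subst hsum
        simp [F, Fa]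
      · set p0 := E.min' hne with hp0def
        have hp0 : p0 ∈ E := E.min'_mem hne
        have hmin : ∀ p ∈ E, p0 ≤ p := fun p hp => E.min'_le p hp
        have hEsplit : A k p0 + ∑ p ∈ E.erase p0, A k p = m := by
          rw [Finset.add_sum_erase _ _ hp0]; exact hsum
        have herase_gt : ∀ p ∈ E.erase p0, p0 < p := by
          intro p hp
          have h1 := Finset.mem_of_mem_erase hp
          have h2 := Finset.ne_of_mem_erase hp
          have := hmin p h1
          omega
        have hdisj : Disjoint (E.erase p0) (chain k p0) := by
          rw [Finset.disjoint_left]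
          intro a ha hc
          have := chain_lt k p0 a hc
          have := herase_gt a ha
          omega
        set Dm : Finset ℕ := (E.erase p0) ∪ chain k p0 with hDmdef
        have hchsum := chain_sum k hk p0
        have hDmsum : ∑ p ∈ Dm, A k p + 1 = m := by
          rw [hDmdef, Finset.sum_union hdisj]
          omega
        have hm1 : 1 ≤ m := by
          have := A_pos k p0
          omega
        have hcanon : IsCanonDecomp k (m - 1) Dm := by
          constructor
          · intro a ha b hb hne'
            have key : ∀ a ∈ Dm, ∀ b ∈ Dm, a < b → a + k ≤ b := by
              intro a ha b hb hab
              rw [hDmdef, Finset.mem_union] at ha hb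
              rcases ha with ha | ha <;> rcases hb with hb | hb
              · exact (hE a (Finset.mem_of_mem_erase ha) b (Finset.mem_of_mem_erase hb)
                  hab).2 p0 hp0 (herase_gt a ha)
              · have := chain_lt k p0 b hb
                have := herase_gt a ha
                omega
              · have hb' := Finset.mem_of_mem_erase hb
                have hbp := herase_gt b hb
                have hac := chain_lt k p0 a ha
                have := (hE p0 hp0 b hb' hbp).1 (by omega)
                omega
              · exact chain_gaps k hk p0 a ha b hb hab
            rw [distdef]
            rcases Nat.lt_or_ge a b with h | h
            · have := key a ha b hb h
              omega
            · have := key b hb a ha (by omega)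
              omega
          · omega
        obtain ⟨m', rfl⟩ : ∃ m', m = m' + 1 := ⟨m - 1, by omega⟩
        have hcanon' : IsCanonDecomp k m' Dm := by
          simpa using hcanon
        have hFk : (F k)^[k] m' = ∑ p ∈ Dm, A k (p - k) :=
          IH m' (by omega) Dm hcanon' k hk (le_refl k)
        have hle : ∑ p ∈ Dm, A k (p - k) ≤ m' := hFk ▸ F_iter_le k k m'
        rw [F_succ k m', hFk]
        have key : ∑ p ∈ E, A k (p - 1) + ∑ p ∈ Dm, A k (p - k) = m' + 1 := by
          rw [hDmdef, Finset.sum_union hdisj]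
          have hE1 : A k (p0 - 1) + ∑ p ∈ E.erase p0, A k (p - 1)
              = ∑ p ∈ E, A k (p - 1) := Finset.add_sum_erase E (fun p => A k (p - 1)) hp0
          have her : ∑ p ∈ E.erase p0, A k (p - 1) + ∑ p ∈ E.erase p0, A k (p - k)
              = ∑ p ∈ E.erase p0, A k p := by
            rw [← Finset.sum_add_distrib]
            apply Finset.sum_congr rfl
            intro p hp
            exact A_rec' k hk p (by have := herase_gt p hp; omega)
          have hch := chain_sumK k hk p0
          omega
        omega
    intro D hD q hq1 hqk
    have main : ∀ j, j ≤ k → (F k)^[j] n = ∑ p ∈ D, A k (p - j) := by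
      intro j
      induction j with
      | zero =>
        intro _
        simpa using hD.2.symm
      | succ j ihj =>
        intro hj
        have hstep := ihj (by omega)
        have hinj : ∀ a ∈ D, ∀ b ∈ D, a - j = b - j → a = b := by
          intro a ha b hb hab
          by_contra hne
          have hd := hD.1 a ha b hb hne
          rw [distdef] at hd
          omega
        set E := D.image (fun p => p - j) with hEdef
        have hsumE : ∑ p ∈ E, A k p = (F k)^[j] n := by
          rw [hEdef, Finset.sum_image hinj, hstep]
        have hadm : Adm k E := by
          intro a ha b hb hab
          rw [hEdef, Finset.mem_image] at ha hb
          obtain ⟨p, hp, rfl⟩ := ha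
          obtain ⟨q', hq', rfl⟩ := hb
          have hpq : p < q' := by omega
          have hd := hD.1 p hp q' hq' (by omega)
          rw [distdef] at hd
          constructor
          · intro h1
            omega
          · intro r hr hrlt
            rw [hEdef, Finset.mem_image] at hr
            obtain ⟨r', hr', rfl⟩ := hr
            have hrp : r' < p := by omega
            have hd2 := hD.1 r' hr' p hp (by omega)
            rw [distdef] at hd2
            omega
        have hmle : (F k)^[j] n ≤ n := F_iter_le k j n
        have hstep1 := onestep ((F k)^[j] n) hmle E hadm hsumE
        rw [Function.iterate_succ_apply', hstep1, hEdef, Finset.sum_image hinj]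
        apply Finset.sum_congr rfl
        intro p hp
        have : p - j - 1 = p - (j + 1) := by omega
        rw [this]
    exact main q hqk

end HofstadterAux

/-- For `1 ≤ q ≤ k`, `F_k^q n = Σ_{p ∈ D_k(n)} A_{k, p ⊖ q}`; in particular
`F_k n = Σ_{p ∈ D_k(n)} A_{k, p ⊖ 1}`. -/
theorem F_iterate_eq_sum_shifted (k : ℕ) (hk : 1 ≤ k) (q : ℕ) (hq : 1 ≤ q)
    (hqk : q ≤ k) (n : ℕ) (D : Finset ℕ) (hD : IsCanonDecomp k n D) :
    (F k)^[q] n = ∑ p ∈ D, A k (p - q) ∧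
    F k n = ∑ p ∈ D, A k (p - 1) := by
  constructor
  · exact HofstadterAux.Fmain k hk n D hD q hq hqk
  · have := HofstadterAux.Fmain k hk n D hD 1 le_rfl hk
    simpa using this
end

section
/- For every integer k ≥ 1, every 0 ≤ q ≤ k and every n ≥ 0, one has F_k^q(n+1) = F_k^q(n) if and only if D_k(n) is nonempty and its least element is strictly less than q. In particular F_k(n+1) = F_k(n) iff 0 ∈ D_k(n). -/
namespace HofP

def sA (k : ℕ) (l : List ℕ) : ℕ := (l.map (A k)).sum

def Canon (k : ℕ) (l : List ℕ) : Prop := l.Pairwise (fun a b => a + k ≤ b)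

def push (k : ℕ) : ℕ → List ℕ → List ℕ
  | p, [] => [p]
  | p, x :: t => if x + 1 = p + k then push k (x+1) t else p :: x :: t

@[simp] lemma sA_nil (k : ℕ) : sA k [] = 0 := rfl
@[simp] lemma sA_cons (k x : ℕ) (l : List ℕ) : sA k (x :: l) = A k x + sA k l := rfl
lemma sA_append (k : ℕ) (l l' : List ℕ) : sA k (l ++ l') = sA k l + sA k l' := by
  simp [sA]

lemma canon_cons_iff {k x : ℕ} {l : List ℕ} :
    Canon k (x :: l) ↔ (∀ y ∈ l, x + k ≤ y) ∧ Canon k l := List.pairwise_cons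

end HofP

namespace HofP

@[simp] lemma A_zero (k : ℕ) : A k 0 = 1 := by simp [A]

lemma A_succ' (k p : ℕ) : A k (p+1) = if p + 1 < k then p + 2 else A k p + A k (p + 1 - max k 1) := by
  rw [A]

lemma A_pos (k p : ℕ) : 1 ≤ A k p := by
  induction p using Nat.strong_induction_on with
  | _ p ih =>
    cases p with
    | zero => simp [A]
    | succ p =>
      rw [A_succ']
      split
      · omega
      · have := ih p (by omega); omega

variable {k : ℕ}

lemma A_rec (hk : 1 ≤ k) {p : ℕ} (hp : k ≤ p) : A k p = A k (p-1) + A k (p-k) := by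
  obtain ⟨p', rfl⟩ : ∃ p', p = p' + 1 := ⟨p - 1, by omega⟩
  rw [A_succ', if_neg (by omega)]
  have : max k 1 = k := by omega
  simp [this]

lemma A_small (hk : 1 ≤ k) {p : ℕ} (hp : p ≤ k) : A k p = p + 1 := by
  induction p with
  | zero => simp [A]
  | succ p ih =>
    rw [A_succ']
    split
    · rfl
    · have h0 : p + 1 - max k 1 = 0 := by omega
      rw [h0, ih (by omega)]
      simp [A]

lemma A_strictMono (hk : 1 ≤ k) : StrictMono (A k) := by
  apply strictMono_nat_of_lt_succ
  intro p
  rw [A_succ']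
  split
  · rw [A_small hk (by omega)]; omega
  · have := A_pos k (p + 1 - max k 1); omega

lemma A_mono (hk : 1 ≤ k) : Monotone (A k) := (A_strictMono hk).monotone

lemma A_merge (hk : 1 ≤ k) {q p : ℕ} (hq : q ≤ k) (hp : 1 ≤ p) :
    A k (p - q) + A k (p + k - 1 - q) = A k (p + k - q) := by
  rcases le_or_gt q p with h | h
  · have h1 := A_rec hk (show k ≤ p + k - q by omega)
    have e1 : p + k - 1 - q = (p + k - q) - 1 := by omega
    have e2 : p - q = (p + k - q) - k := by omega
    rw [e1, e2]; omega
  · have h0 : p - q = 0 := by omega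
    rw [h0, A_small hk (show p + k - 1 - q ≤ k by omega),
      A_small hk (show p + k - q ≤ k by omega), A_zero]
    omega

lemma push_nil (k p : ℕ) : push k p [] = [p] := rfl
lemma push_cons (k p x : ℕ) (t : List ℕ) :
    push k p (x :: t) = if x + 1 = p + k then push k (x+1) t else p :: x :: t := rfl

lemma head_cond_of_canon {x : ℕ} {t : List ℕ} (h : Canon k (x :: t)) :
    ∀ y ∈ t.head?, (x + 1) + k ≤ y + 1 := by
  intro y hy
  cases t with
  | nil => simp at hy
  | cons b r =>
    simp at hy
    have := (canon_cons_iff.1 h).1 b (by simp)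
    omega

lemma push_decr_sum (hk : 1 ≤ k) {q : ℕ} (hq : q ≤ k) :
    ∀ (r : List ℕ) (p : ℕ), 1 ≤ p → Canon k r → (∀ x ∈ r.head?, p + k ≤ x + 1) →
    sA k ((push k p r).map (· - q)) = A k (p - q) + sA k (r.map (· - q)) := by
  intro r
  induction r with
  | nil => intro p _ _ _; simp [push_nil, sA]
  | cons x t ih =>
    intro p hp hc hh
    rw [push_cons]
    split
    · rename_i hx
      rw [ih (x+1) (by omega) (canon_cons_iff.1 hc).2 (head_cond_of_canon hc)]
      have hm := A_merge hk hq hp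
      have e1 : x + 1 - q = p + k - q := by omega
      have e2 : x - q = p + k - 1 - q := by omega
      simp only [List.map_cons, sA_cons, e1, e2]
      omega
    · simp [sA]

lemma push_canon (hk : 1 ≤ k) :
    ∀ (r : List ℕ) (p : ℕ), Canon k r → (∀ x ∈ r.head?, p + k ≤ x + 1) →
    Canon k (push k p r) ∧ ∀ y ∈ push k p r, p ≤ y := by
  intro r
  induction r with
  | nil =>
    intro p _ _
    refine ⟨List.pairwise_singleton _ _, ?_⟩
    simp [push_nil]
  | cons x t ih =>
    intro p hc hh
    rw [push_cons]
    split
    · rename_i hx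
      obtain ⟨h1, h2⟩ := ih (x+1) (canon_cons_iff.1 hc).2 (head_cond_of_canon hc)
      exact ⟨h1, fun y hy => by have := h2 y hy; omega⟩
    · rename_i hx
      have hpx : p + k ≤ x := by have := hh x (by simp); omega
      refine ⟨canon_cons_iff.2 ⟨?_, hc⟩, ?_⟩
      · intro y hy
        rcases List.mem_cons.1 hy with rfl | hy
        · exact hpx
        · have := (canon_cons_iff.1 hc).1 y hy; omega
      · intro y hy
        rcases List.mem_cons.1 hy with rfl | hy
        · omega
        · rcases List.mem_cons.1 hy with rfl | hy
          · omega
          · have := (canon_cons_iff.1 hc).1 y hy; omega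

lemma push_sum (hk : 1 ≤ k) (r : List ℕ) (p : ℕ) (hp : 1 ≤ p) (hc : Canon k r)
    (hh : ∀ x ∈ r.head?, p + k ≤ x + 1) :
    sA k (push k p r) = A k p + sA k r := by
  have := push_decr_sum hk (Nat.zero_le k) r p hp hc hh
  simpa using this

end HofP

namespace HofP

def nextD (k : ℕ) : List ℕ → List ℕ
  | [] => [0]
  | m :: t => if m < k then push k (m+1) t else 0 :: m :: t

def decomp (k : ℕ) : ℕ → List ℕ
  | 0 => []
  | n + 1 => nextD k (decomp k n)

lemma decomp_spec (hk : 1 ≤ k) : ∀ n, Canon k (decomp k n) ∧ sA k (decomp k n) = n := by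
  intro n
  induction n with
  | zero => exact ⟨List.Pairwise.nil, rfl⟩
  | succ n ih =>
    obtain ⟨hc, hs⟩ := ih
    show Canon k (nextD k (decomp k n)) ∧ sA k (nextD k (decomp k n)) = n + 1
    cases h : decomp k n with
    | nil =>
      rw [h] at hs
      simp only [nextD]
      constructor
      · exact List.pairwise_singleton _ _
      · simp only [sA_nil] at hs
        simp [sA]; omega
    | cons m t =>
      rw [h] at hc hs
      simp only [nextD]
      split
      · rename_i hm
        have hct := (canon_cons_iff.1 hc).2
        have hht : ∀ x ∈ t.head?, (m+1) + k ≤ x + 1 := head_cond_of_canon hc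
        constructor
        · exact (push_canon hk t (m+1) hct hht).1
        · rw [push_sum hk t (m+1) (by omega) hct hht]
          rw [A_small hk (show m + 1 ≤ k by omega)]
          rw [sA_cons, A_small hk (by omega)] at hs
          omega
      · rename_i hm
        constructor
        · refine canon_cons_iff.2 ⟨?_, hc⟩
          intro y hy
          rcases List.mem_cons.1 hy with rfl | hy
          · omega
          · have := (canon_cons_iff.1 hc).1 y hy; omega
        · rw [sA_cons, A_zero]; omega

lemma sA_bound (hk : 1 ≤ k) :
    ∀ (l : List ℕ) (P : ℕ), Canon k l → (∀ x ∈ l, x ≤ P) → sA k l ≤ A k (P+1) - 1 := by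
  intro l
  induction l using List.reverseRecOn with
  | nil => intro P _ _; simp
  | append_singleton l p ih =>
    intro P hc hb
    have hsplit := List.pairwise_append.1 hc
    have hfr : ∀ a ∈ l, a + k ≤ p := by
      intro a ha; exact hsplit.2.2 a ha p (by simp)
    have hpP : p ≤ P := hb p (by simp)
    rw [sA_append]
    rcases lt_or_ge p k with h | h
    · have hl : l = [] := by
        cases l with
        | nil => rfl
        | cons a t => exact absurd (hfr a (by simp)) (by omega)
      subst hl
      simp only [sA_nil, sA_cons, sA_nil]
      rw [A_small hk (by omega)]
      have : p + 2 ≤ A k (P+1) := by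
        calc p + 2 = A k (p+1) := (A_small hk (by omega)).symm
        _ ≤ A k (P+1) := A_mono hk (by omega)
      omega
    · have ihl := ih (p - k) hsplit.1 (fun a ha => by have := hfr a ha; omega)
      have hrec : A k (p+1) = A k p + A k (p+1-k) := by
        have h := A_rec hk (show k ≤ p + 1 by omega)
        exact h
      have hmono : A k (p+1) ≤ A k (P+1) := A_mono hk (by omega)
      have e : p + 1 - k = p - k + 1 := by omega
      rw [e] at hrec
      have := A_pos k (p - k + 1)
      simp only [sA_cons, sA_nil]
      omega

lemma canon_uniq (hk : 1 ≤ k) :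
    ∀ (n : ℕ) (l l' : List ℕ), Canon k l → Canon k l' → sA k l = n → sA k l' = n → l = l' := by
  intro n
  induction n using Nat.strong_induction_on with
  | _ n ih =>
    intro l l' hc hc' hs hs'
    have key : ∀ (f : List ℕ) (p : ℕ), Canon k (f ++ [p]) → sA k (f ++ [p]) = n →
        n < A k (p+1) ∧ A k p ≤ n := by
      intro f p hcf hsf
      constructor
      · have hb : ∀ x ∈ f ++ [p], x ≤ p := by
          intro x hx
          rcases List.mem_append.1 hx with hx | hx
          · have := (List.pairwise_append.1 hcf).2.2 x hx p (by simp); omega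
          · simp at hx; omega
        have := sA_bound hk (f ++ [p]) p hcf hb
        have := A_pos k (p+1)
        omega
      · rw [← hsf, sA_append]; simp only [sA_cons, sA_nil]; omega
    rcases List.eq_nil_or_concat l with rfl | ⟨f1, p1, rfl⟩
    · rcases List.eq_nil_or_concat l' with rfl | ⟨f2, p2, rfl⟩
      · rfl
      · exfalso
        rw [List.concat_eq_append] at hc' hs'
        have := key f2 p2 hc' hs'
        have := A_pos k p2
        simp only [sA_nil] at hs
        omega
    · rw [List.concat_eq_append] at hc hs ⊢
      rcases List.eq_nil_or_concat l' with rfl | ⟨f2, p2, rfl⟩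
      · exfalso
        have := key f1 p1 hc hs
        have := A_pos k p1
        simp only [sA_nil] at hs'
        omega
      rw [List.concat_eq_append] at hc' hs' ⊢
      have h1 := key f1 p1 hc hs
      have h2 := key f2 p2 hc' hs'
      have hpp : p1 = p2 := by
        by_contra hne
        rcases lt_or_gt_of_ne hne with h | h
        · have : A k (p1+1) ≤ A k p2 := A_mono hk (by omega)
          omega
        · have : A k (p2+1) ≤ A k p1 := A_mono hk (by omega)
          omega
      subst hpp
      have hff : f1 = f2 := by
        have hA := A_pos k p1
        have hsf1 : sA k f1 = n - A k p1 := by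
          rw [sA_append] at hs; simp only [sA_cons, sA_nil] at hs; omega
        have hsf2 : sA k f2 = n - A k p1 := by
          rw [sA_append] at hs'; simp only [sA_cons, sA_nil] at hs'; omega
        exact ih (n - A k p1) (by omega) f1 f2
          (List.pairwise_append.1 hc).1 (List.pairwise_append.1 hc').1 hsf1 hsf2
      rw [hff]

lemma decomp_eq (hk : 1 ≤ k) {n : ℕ} {l : List ℕ} (hc : Canon k l) (hs : sA k l = n) :
    decomp k n = l :=
  (canon_uniq hk n l (decomp k n) hc (decomp_spec hk n).1 hs (decomp_spec hk n).2).symm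

end HofP

namespace HofP

variable {k : ℕ}

lemma canon_min {m : ℕ} {t : List ℕ} (hc : Canon k (m :: t)) : ∀ x ∈ m :: t, m ≤ x := by
  intro x hx
  rcases List.mem_cons.1 hx with rfl | hx
  · exact le_rfl
  · have := (canon_cons_iff.1 hc).1 x hx; omega

lemma canon_map_sub {j : ℕ} : ∀ {l : List ℕ}, Canon k l → (∀ x ∈ l, j ≤ x) →
    Canon k (l.map (· - j)) := by
  intro l hc hb
  induction l with
  | nil => exact List.Pairwise.nil
  | cons x t ih =>
    simp only [List.map_cons]
    refine canon_cons_iff.2 ⟨?_, ih (canon_cons_iff.1 hc).2 (fun y hy => hb y (by simp [hy]))⟩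
    intro y hy
    obtain ⟨z, hz, rfl⟩ := List.mem_map.1 hy
    have h1 := (canon_cons_iff.1 hc).1 z hz
    have h2 := hb x (by simp)
    omega

lemma map_sub_sub (j : ℕ) (l : List ℕ) :
    (l.map (· - j)).map (· - 1) = l.map (· - (j+1)) := by
  rw [List.map_map]
  apply List.map_congr_left
  intro x _
  simp only [Function.comp_apply]
  omega

lemma sA_map_sub_le (hk : 1 ≤ k) (j : ℕ) (l : List ℕ) : sA k (l.map (· - j)) ≤ sA k l := by
  induction l with
  | nil => simp
  | cons x t ih =>
    simp only [List.map_cons, sA_cons]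
    have := A_mono hk (show x - j ≤ x by omega)
    omega

lemma sA_split (hk : 1 ≤ k) : ∀ l : List ℕ, (∀ x ∈ l, k ≤ x) →
    sA k (l.map (· - 1)) + sA k (l.map (· - k)) = sA k l := by
  intro l hb
  induction l with
  | nil => simp
  | cons x t ih =>
    simp only [List.map_cons, sA_cons]
    have hx := hb x (by simp)
    have hr := A_rec hk hx
    have := ih (fun y hy => hb y (by simp [hy]))
    omega

def g (k n : ℕ) : ℕ := sA k ((decomp k n).map (· - 1))

lemma g_eval (hk : 1 ≤ k) {l : List ℕ} (hc : Canon k l) :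
    g k (sA k l) = sA k (l.map (· - 1)) := by
  rw [g, decomp_eq hk hc rfl]

@[simp] lemma g_zero (k : ℕ) : g k 0 = 0 := rfl

lemma g_one (k : ℕ) : g k 1 = 1 := by
  show sA k ((nextD k (decomp k 0)).map (· - 1)) = 1
  show sA k ([0].map (· - 1)) = 1
  simp [sA]

lemma g_le (hk : 1 ≤ k) (n : ℕ) : g k n ≤ n := by
  have := sA_map_sub_le hk 1 (decomp k n)
  rw [(decomp_spec hk n).2] at this
  exact this

lemma g_lax (hk : 1 ≤ k) {b : ℕ} {r : List ℕ} (hb : 1 ≤ b) (hc : Canon k (b :: r)) :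
    g k (1 + sA k (b :: r)) = 1 + sA k ((b :: r).map (· - 1)) := by
  rcases lt_or_ge b k with hbk | hbk
  · have hct := (canon_cons_iff.1 hc).2
    have hht : ∀ x ∈ r.head?, (b+1) + k ≤ x + 1 := head_cond_of_canon hc
    have hps := push_sum hk r (b+1) (by omega) hct hht
    have hval : 1 + sA k (b :: r) = sA k (push k (b+1) r) := by
      rw [hps, sA_cons, A_small hk (show b ≤ k by omega), A_small hk (show b+1 ≤ k by omega)]
      omega
    rw [hval, g_eval hk (push_canon hk r (b+1) hct hht).1,
      push_decr_sum hk hk r (b+1) (by omega) hct hht]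
    simp only [List.map_cons, sA_cons]
    rw [show b + 1 - 1 = b from by omega, A_small hk (show b ≤ k by omega),
      A_small hk (show b - 1 ≤ k by omega)]
    omega
  · have hc0 : Canon k (0 :: b :: r) := by
      refine canon_cons_iff.2 ⟨?_, hc⟩
      intro y hy
      rcases List.mem_cons.1 hy with rfl | hy
      · omega
      · have := (canon_cons_iff.1 hc).1 y hy; omega
    have hval : 1 + sA k (b :: r) = sA k (0 :: b :: r) := by simp
    rw [hval, g_eval hk hc0]
    simp

lemma g_iter (hk : 1 ≤ k) : ∀ j, j ≤ k → ∀ l : List ℕ, Canon k l →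
    (g k)^[j] (sA k l) = sA k (l.map (· - j)) := by
  intro j
  induction j with
  | zero => intro _ l _; simp
  | succ j ih =>
    intro hj l hc
    rw [Function.iterate_succ_apply', ih (by omega) l hc]
    cases l with
    | nil => simp
    | cons m t =>
      rcases le_or_gt j m with hjm | hmj
      · have hcj : Canon k ((m :: t).map (· - j)) :=
          canon_map_sub hc (fun x hx => le_trans hjm (canon_min hc x hx))
        rw [g_eval hk hcj, map_sub_sub]
      · have hmt := (canon_cons_iff.1 hc).1
        have hm0 : m - j = 0 := by omega
        have hm0' : m - (j+1) = 0 := by omega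
        cases t with
        | nil =>
          simp only [List.map_cons, List.map_nil, sA_cons, sA_nil, hm0, hm0', A_zero]
          simpa using g_one k
        | cons b r =>
          have hbk : m + k ≤ b := hmt b (by simp)
          have hjb : ∀ x ∈ b :: r, j ≤ x := by
            intro x hx
            rcases List.mem_cons.1 hx with rfl | hx
            · omega
            · have := (canon_cons_iff.1 (canon_cons_iff.1 hc).2).1 x hx; omega
          have hcj : Canon k ((b :: r).map (· - j)) :=
            canon_map_sub (canon_cons_iff.1 hc).2 hjb
          have hb1 : 1 ≤ b - j := by omega
          have hshape : (m :: b :: r).map (· - j) = 0 :: (b - j) :: r.map (· - j) := by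
            simp [hm0]
          rw [hshape]
          have hcj' : Canon k ((b - j) :: r.map (· - j)) := by
            simpa using hcj
          have := g_lax hk hb1 hcj'
          rw [sA_cons, A_zero, this]
          have hmm : ((b - j) :: r.map (· - j)).map (· - 1) = (b :: r).map (· - (j+1)) := by
            have := map_sub_sub j (b :: r)
            simpa using this
          rw [hmm]
          simp [hm0']

lemma g_rec (hk : 1 ≤ k) (n : ℕ) :
    g k (n+1) + (g k)^[k] n = n + 1 ∧ (g k)^[k] n ≤ n := by
  obtain ⟨hc, hs⟩ := decomp_spec hk n
  have hit : (g k)^[k] n = sA k ((decomp k n).map (· - k)) := by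
    have := g_iter hk k le_rfl (decomp k n) hc
    rw [hs] at this
    exact this
  have hle : (g k)^[k] n ≤ n := by
    have h2 := sA_map_sub_le hk k (decomp k n)
    rw [hs] at h2
    rw [hit]; exact h2
  refine ⟨?_, hle⟩
  have hg1 : g k (n+1) = sA k ((nextD k (decomp k n)).map (· - 1)) := rfl
  cases h : decomp k n with
  | nil =>
    rw [h] at hs hit hg1
    simp only [sA_nil] at hs
    simp only [nextD] at hg1
    rw [hit, hg1]
    simp [sA, ← hs]
  | cons m t =>
    rw [h] at hs hc hit hg1
    have hct := (canon_cons_iff.1 hc).2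
    by_cases hm : m < k
    · have hht : ∀ x ∈ t.head?, (m+1) + k ≤ x + 1 := head_cond_of_canon hc
      have hsp : sA k (t.map (· - 1)) + sA k (t.map (· - k)) = sA k t :=
        sA_split hk t (fun x hx => by have := (canon_cons_iff.1 hc).1 x hx; omega)
      have e1 : sA k ((nextD k (m :: t)).map (· - 1)) = A k m + sA k (t.map (· - 1)) := by
        simp only [nextD, if_pos hm]
        rw [push_decr_sum hk hk t (m+1) (by omega) hct hht,
          show m + 1 - 1 = m from by omega]
      have e2 : sA k ((m :: t).map (· - k)) = 1 + sA k (t.map (· - k)) := by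
        simp only [List.map_cons, sA_cons, show m - k = 0 from by omega, A_zero]
      rw [hit, hg1, e1, e2]
      simp only [sA_cons] at hs
      omega
    · have hsp : sA k ((m :: t).map (· - 1)) + sA k ((m :: t).map (· - k)) = sA k (m :: t) :=
        sA_split hk (m :: t) (fun x hx => by
          have := canon_min hc x hx; omega)
      have e1 : sA k ((nextD k (m :: t)).map (· - 1))
          = 1 + sA k ((m :: t).map (· - 1)) := by
        simp only [nextD, if_neg hm, List.map_cons, sA_cons, Nat.zero_sub, A_zero]
      rw [hit, hg1, e1]
      omega

end HofP

namespace HofP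

lemma Fa_le (k : ℕ) : ∀ f n, Fa k f n ≤ n := by
  intro f n
  cases f with
  | zero => simp [Fa]
  | succ f =>
    cases n with
    | zero => simp [Fa]
    | succ n => exact Nat.sub_le _ _

lemma Fa_zero_arg (k f : ℕ) : Fa k f 0 = 0 := by
  cases f <;> simp [Fa]

lemma Fa_succ (k f n : ℕ) : Fa k (f+1) (n+1) = (n+1) - (Fa k f)^[k] n := rfl

lemma Fa_congr (k : ℕ) : ∀ n f f', n ≤ f → n ≤ f' → Fa k f n = Fa k f' n := by
  intro n
  induction n using Nat.strong_induction_on with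
  | _ n ih =>
    intro f f' hf hf'
    cases n with
    | zero => rw [Fa_zero_arg, Fa_zero_arg]
    | succ n =>
      obtain ⟨a, rfl⟩ : ∃ a, f = a + 1 := ⟨f - 1, by omega⟩
      obtain ⟨b, rfl⟩ : ∃ b, f' = b + 1 := ⟨f' - 1, by omega⟩
      rw [Fa_succ, Fa_succ]
      have key : ∀ j x, x ≤ n → (Fa k a)^[j] x = (Fa k b)^[j] x := by
        intro j
        induction j with
        | zero => intro x _; rfl
        | succ j ihj =>
          intro x hx
          rw [Function.iterate_succ_apply, Function.iterate_succ_apply,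
            ih x (by omega) a b (by omega) (by omega)]
          exact ihj (Fa k b x) (le_trans (Fa_le k b x) hx)
      rw [key k n le_rfl]

lemma F_eq_Fa (k : ℕ) {n f : ℕ} (h : n ≤ f) : F k n = Fa k f n :=
  Fa_congr k n n f le_rfl h

lemma F_le (k n : ℕ) : F k n ≤ n := Fa_le k n n

lemma F_succ (k n : ℕ) : F k (n+1) = (n+1) - (F k)^[k] n := by
  show Fa k (n+1) (n+1) = _
  rw [Fa_succ]
  have key : ∀ j x, x ≤ n → (Fa k n)^[j] x = (F k)^[j] x := by
    intro j
    induction j with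
    | zero => intro x _; rfl
    | succ j ihj =>
      intro x hx
      rw [Function.iterate_succ_apply, Function.iterate_succ_apply,
        ← F_eq_Fa k hx]
      exact ihj (F k x) (le_trans (F_le k x) hx)
  rw [key k n le_rfl]

lemma F_eq_g {k : ℕ} (hk : 1 ≤ k) : ∀ n, F k n = g k n := by
  intro n
  induction n using Nat.strong_induction_on with
  | _ n ih =>
    cases n with
    | zero => rfl
    | succ n =>
      rw [F_succ]
      have key : ∀ j x, x ≤ n → (F k)^[j] x = (g k)^[j] x := by
        intro j
        induction j with
        | zero => intro x _; rfl
        | succ j ihj =>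
          intro x hx
          rw [Function.iterate_succ_apply, Function.iterate_succ_apply, ih x (by omega)]
          exact ihj (g k x) (le_trans (g_le hk x) hx)
      rw [key k n le_rfl]
      have := g_rec hk n
      omega

end HofP

/-- For `0 ≤ q ≤ k` : `F_k^q (n+1) = F_k^q n` iff the canonical
`k`-decomposition of `n` is nonempty with least element `< q`.
In particular `F_k (n+1) = F_k n` iff `0 ∈ D_k(n)`. -/
theorem F_iterate_flat_iff_rank_lt (k : ℕ) (hk : 1 ≤ k) (q : ℕ) (hqk : q ≤ k)
    (n : ℕ) (D : Finset ℕ) (hD : IsCanonDecomp k n D) :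
    ((F k)^[q] (n + 1) = (F k)^[q] n ↔ ∃ p ∈ D, p < q ∧ ∀ r ∈ D, p ≤ r) ∧
    (F k (n + 1) = F k n ↔ 0 ∈ D) := by
  classical
  obtain ⟨hdist, hsum⟩ := hD
  set l := D.sort (· ≤ ·) with hl
  have hmem : ∀ p, p ∈ l ↔ p ∈ D := fun p => Finset.mem_sort _
  have hsort : l.Pairwise (· < ·) := (Finset.sortedLT_sort D).pairwise
  have hcanon : HofP.Canon k l := by
    apply List.Pairwise.imp_of_mem ?_ hsort
    intro a b ha hb hab
    have hd := hdist a ((hmem a).1 ha) b ((hmem b).1 hb) (ne_of_lt hab)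
    simp [Nat.dist] at hd
    omega
  have hsuml : HofP.sA k l = n := by
    rw [← hsum]
    show (l.map (A k)).sum = _
    rw [List.Perm.sum_eq ((Finset.sort_perm_toList D (· ≤ ·)).map (A k))]
    exact Finset.sum_map_toList D (A k)
  have hdec : HofP.decomp k n = l := HofP.decomp_eq hk hcanon hsuml
  have hFg : F k = HofP.g k := funext (HofP.F_eq_g hk)
  have main : ∀ q', q' ≤ k →
      (((F k)^[q'] (n + 1) = (F k)^[q'] n) ↔ ∃ m t, l = m :: t ∧ m < q') := by
    intro q' hq'
    rw [hFg]
    have hn1 : (HofP.g k)^[q'] n = HofP.sA k (l.map (· - q')) := by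
      rw [← hsuml]
      exact HofP.g_iter hk q' hq' l hcanon
    have hstep : HofP.decomp k (n+1) = HofP.nextD k l := by
      show HofP.nextD k (HofP.decomp k n) = HofP.nextD k l
      rw [hdec]
    have hc' : HofP.Canon k (HofP.nextD k l) ∧ HofP.sA k (HofP.nextD k l) = n + 1 := by
      have := HofP.decomp_spec hk (n+1)
      rwa [hstep] at this
    have hn2 : (HofP.g k)^[q'] (n+1) = HofP.sA k ((HofP.nextD k l).map (· - q')) := by
      rw [← hc'.2]
      exact HofP.g_iter hk q' hq' _ hc'.1
    rw [hn1, hn2]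
    cases hle : l with
    | nil =>
      rw [hle] at hn1 hn2
      constructor
      · intro h
        exfalso
        simp [HofP.nextD, HofP.sA] at h
      · rintro ⟨m, t, ht, -⟩
        simp at ht
    | cons m t =>
      rw [hle] at hcanon
      have hct := (HofP.canon_cons_iff.1 hcanon).2
      have hrhs : (∃ m' t', m :: t = m' :: t' ∧ m' < q') ↔ m < q' := by
        constructor
        · rintro ⟨m', t', he, hlt⟩
          cases he
          exact hlt
        · intro h; exact ⟨m, t, rfl, h⟩
      rw [hrhs]
      by_cases hmk : m < k
      · have hht : ∀ x ∈ t.head?, (m+1) + k ≤ x + 1 := HofP.head_cond_of_canon hcanon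
        have hnd : HofP.nextD k (m :: t) = HofP.push k (m+1) t := by
          simp [HofP.nextD, hmk]
        rw [hnd, HofP.push_decr_sum hk hq' t (m+1) (by omega) hct hht]
        simp only [List.map_cons, HofP.sA_cons]
        by_cases hmq : m < q'
        · rw [show m + 1 - q' = 0 from by omega, show m - q' = 0 from by omega]
          simp [hmq]
        · have he : m + 1 - q' = (m - q') + 1 := by omega
          rw [he]
          have hlt := HofP.A_strictMono hk (show m - q' < m - q' + 1 from by omega)
          constructor
          · intro h; omega
          · intro h; omega
      · have hnd : HofP.nextD k (m :: t) = 0 :: m :: t := by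
          simp [HofP.nextD, hmk]
        have hmq : ¬ m < q' := by omega
        rw [hnd]
        simp only [List.map_cons, HofP.sA_cons, Nat.zero_sub, HofP.A_zero]
        constructor
        · intro h
          exfalso
          have := HofP.A_pos k (m - q')
          omega
        · intro h; omega
  constructor
  · rw [main q hqk]
    constructor
    · rintro ⟨m, t, he, hlt⟩
      refine ⟨m, (hmem m).1 (by rw [he]; simp), hlt, ?_⟩
      intro r hr
      have hrl : r ∈ l := (hmem r).2 hr
      rw [he] at hrl
      exact HofP.canon_min (by rw [← he]; exact hcanon) r hrl
    · rintro ⟨p, hp, hpq, hmin⟩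
      have hpl : p ∈ l := (hmem p).2 hp
      cases hle : l with
      | nil => rw [hle] at hpl; simp at hpl
      | cons m t =>
        rw [hle] at hpl hcanon
        have h1 : m ≤ p := HofP.canon_min hcanon p hpl
        have h2 : p ≤ m := hmin m ((hmem m).1 (by rw [hle]; simp))
        exact ⟨m, t, rfl, by omega⟩
  · have h1 := main 1 hk
    rw [show (F k)^[1] = F k from funext (fun x => Function.iterate_one (F k) ▸ rfl)] at h1
    rw [h1]
    constructor
    · rintro ⟨m, t, he, hlt⟩
      have : m = 0 := by omega
      subst this
      exact (hmem 0).1 (by rw [he]; simp)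
    · intro h0
      have h0l : (0 : ℕ) ∈ l := (hmem 0).2 h0
      cases hle : l with
      | nil => rw [hle] at h0l; simp at h0l
      | cons m t =>
        rw [hle] at h0l hcanon
        have h1 : m ≤ 0 := HofP.canon_min hcanon 0 h0l
        exact ⟨m, t, rfl, by omega⟩
end

section
/- As k → ∞, β_k = 1 + ln(k)/k + o(ln(k)/k) and α_k = 1 − ln(k)/k + o(ln(k)/k); equivalently, k·(β_k − 1)/ln k → 1 and k·(1 − α_k)/ln k → 1 as k → ∞. -/
open Filter Real

/-- If `t` is the root of `(1-t)^k = t` in `(0,1)` and `(1-c)^k ≤ c`, `0 ≤ c`, then `t ≤ c`. -/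
private lemma root_le {k : ℕ} {t c : ℝ} (ht1 : t < 1)
    (heq : (1 - t) ^ k = t) (hc : (1 - c) ^ k ≤ c) : t ≤ c := by
  by_contra h
  push_neg at h
  have h1 : (1 - t) ^ k ≤ (1 - c) ^ k := pow_le_pow_left₀ (by linarith) (by linarith) k
  rw [heq] at h1
  linarith

private lemma le_root {k : ℕ} {t c : ℝ} (ht0 : 0 < t)
    (heq : (1 - t) ^ k = t) (hc1 : c ≤ 1) (hc : c ≤ (1 - c) ^ k) : c ≤ t := by
  by_contra h
  push_neg at h
  have h1 : (1 - c) ^ k ≤ (1 - t) ^ k := pow_le_pow_left₀ (by linarith) (by linarith) k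
  rw [heq] at h1
  linarith

set_option maxHeartbeats 1000000 in
/-- key asymptotic fact. -/
private lemma tendsto_key (a : ℕ → ℝ)
    (ha : ∀ k : ℕ, 1 ≤ k → a k ∈ Set.Ioo (0 : ℝ) 1 ∧ a k ^ k + a k - 1 = 0) :
    Tendsto (fun k : ℕ => k * (1 - a k) / Real.log k) atTop (nhds 1) := by
  have hlogto : Tendsto (fun k : ℕ => Real.log k) atTop atTop :=
    Real.tendsto_log_atTop.comp tendsto_natCast_atTop_atTop
  have small : ∀ δ : ℝ, 0 < δ → ∀ᶠ x : ℝ in atTop, Real.log x ≤ δ * x := by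
    intro δ hδ
    filter_upwards [Real.isLittleO_log_id_atTop.def hδ, eventually_ge_atTop (1:ℝ)]
      with x hx hx1
    have h2 : |x| = x := abs_of_nonneg (by linarith)
    have hx' : |Real.log x| ≤ δ * x := by simpa [Real.norm_eq_abs, h2] using hx
    linarith [le_abs_self (Real.log x)]
  have smallN : ∀ δ : ℝ, 0 < δ → ∀ᶠ k : ℕ in atTop, Real.log k ≤ δ * k :=
    fun δ hδ => tendsto_natCast_atTop_atTop.eventually (small δ hδ)
  have smallLL : ∀ δ : ℝ, 0 < δ →
      ∀ᶠ k : ℕ in atTop, Real.log (Real.log k) ≤ δ * Real.log k :=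
    fun δ hδ => hlogto.eventually (small δ hδ)
  have key : ∀ ε : ℝ, 0 < ε → ε < 1 →
      ∀ᶠ k : ℕ in atTop, |(k : ℝ) * (1 - a k) / Real.log k - 1| ≤ ε := by
    intro ε hε0 hε1
    filter_upwards [hlogto.eventually_ge_atTop 1, smallN (ε/4) (by linarith),
      smallLL (ε/2) (by linarith), smallN (1/2) (by norm_num),
      eventually_ge_atTop 1] with k hL1 hA hB hHalf hk1
    obtain ⟨⟨ha0, ha1⟩, haeq⟩ := ha k hk1
    set t : ℝ := 1 - a k with htdef
    have heq : (1 - t) ^ k = t := by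
      have : (1 : ℝ) - t = a k := by rw [htdef]; ring
      rw [this, htdef]; linarith
    have ht0 : 0 < t := by rw [htdef]; linarith
    have ht1 : t < 1 := by rw [htdef]; linarith
    set K : ℝ := (k : ℝ) with hKdef
    have hK1 : 1 ≤ K := by rw [hKdef]; exact_mod_cast hk1
    have hK0 : 0 < K := by linarith
    set L : ℝ := Real.log k with hLdef
    have hL0 : 0 < L := by linarith
    -- upper bound : t ≤ (1+ε) L / K
    have hup : t ≤ (1 + ε) * L / K := by
      by_cases hc1 : 1 ≤ (1 + ε) * L / K
      · linarith
      push_neg at hc1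
      set c : ℝ := (1 + ε) * L / K with hcdef
      have hc0 : 0 < c := by positivity
      apply root_le ht1 heq
      have e1 : (1 - c) ^ k ≤ Real.exp (-c) ^ k :=
        pow_le_pow_left₀ (by linarith) (by linarith [Real.add_one_le_exp (-c)]) k
      have e2 : Real.exp (-c) ^ k = Real.exp (-((1 + ε) * L)) := by
        rw [← Real.exp_nat_mul]
        congr 1
        rw [hcdef, ← hKdef]
        field_simp
      have e3 : Real.exp (-((1 + ε) * L)) = Real.exp (-L) * Real.exp (-(ε * L)) := by
        rw [← Real.exp_add]; ring_nf
      have e4 : Real.exp (-L) = 1 / K := by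
        rw [Real.exp_neg, hLdef, ← hKdef, Real.exp_log hK0, one_div]
      have e5 : Real.exp (-(ε * L)) ≤ 1 := by
        rw [show (1:ℝ) = Real.exp 0 by simp]
        exact Real.exp_le_exp.mpr (by nlinarith)
      have e6 : (1 : ℝ) / K ≤ c := by
        rw [hcdef, div_le_div_iff₀ hK0 hK0]
        nlinarith
      calc (1 - c) ^ k ≤ Real.exp (-L) * Real.exp (-(ε * L)) := by rw [← e3, ← e2]; exact e1
        _ ≤ 1 / K * 1 := by
            rw [e4]
            exact mul_le_mul_of_nonneg_left e5 (by positivity)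
        _ ≤ c := by rw [mul_one]; exact e6
    -- lower bound : (1-ε) L / K ≤ t
    have hlow : (1 - ε) * L / K ≤ t := by
      set c : ℝ := (1 - ε) * L / K with hcdef
      have hc0 : 0 < c := by
        rw [hcdef]
        exact div_pos (mul_pos (by linarith) hL0) hK0
      have hchalf : c ≤ 1 / 2 := by
        have h1 : L / K ≤ 1 / 2 := by
          rw [div_le_iff₀ hK0]
          linarith
        have h2 : c ≤ L / K := by
          rw [hcdef, div_le_div_iff₀ hK0 hK0]
          nlinarith [mul_pos hL0 hK0]
        linarith
      apply le_root ht0 heq (by linarith)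
      -- step 1 : exp(-(c+2c^2)) ≤ 1 - c
      have h1c : (0:ℝ) < 1 - c := by linarith
      have step1 : Real.exp (-(c + 2 * c ^ 2)) ≤ 1 - c := by
        have hlog := Real.log_le_sub_one_of_pos (show (0:ℝ) < (1 - c)⁻¹ by positivity)
        rw [Real.log_inv] at hlog
        have hfrac : (1 - c)⁻¹ - 1 = c / (1 - c) := by field_simp; ring
        have hdiv : c / (1 - c) ≤ c + 2 * c ^ 2 := by
          rw [div_le_iff₀ h1c]
          nlinarith
        have hle : -(c + 2 * c ^ 2) ≤ Real.log (1 - c) := by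
          rw [hfrac] at hlog
          linarith
        calc Real.exp (-(c + 2 * c ^ 2)) ≤ Real.exp (Real.log (1 - c)) :=
              Real.exp_le_exp.mpr hle
          _ = 1 - c := Real.exp_log h1c
      -- step 2 : exponent bound
      have hcK : c * K = (1 - ε) * L := by
        rw [hcdef]
        field_simp
      have hc2K : 2 * c ^ 2 * K ≤ (ε / 2) * L := by
        have hcLK : c ≤ L / K := by
          rw [hcdef, div_le_div_iff₀ hK0 hK0]
          nlinarith [mul_pos hL0 hK0]
        have h1 : 2 * c ^ 2 * K ≤ 2 * (L / K) * (c * K) := by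
          have : 2 * c ^ 2 * K = 2 * c * (c * K) := by ring
          rw [this]
          have hcK0 : 0 ≤ c * K := by positivity
          apply mul_le_mul_of_nonneg_right ?_ hcK0
          nlinarith
        have h2 : 2 * (L / K) * (c * K) ≤ 2 * (L / K) * L := by
          rw [hcK]
          apply mul_le_mul_of_nonneg_left ?_ (by positivity)
          nlinarith
        have h3 : 2 * (L / K) * L ≤ (ε / 2) * L := by
          have hLK : L / K ≤ ε / 4 := by
            rw [div_le_iff₀ hK0]
            linarith
          nlinarith
        linarith
      have step2 : Real.exp (-(c + 2 * c ^ 2)) ^ k = Real.exp (-((c + 2 * c ^ 2) * K)) := by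
        rw [← Real.exp_nat_mul]
        congr 1
        rw [← hKdef]
        ring
      have step3 : -L + (ε / 2) * L ≤ -((c + 2 * c ^ 2) * K) := by
        have : (c + 2 * c ^ 2) * K = c * K + 2 * c ^ 2 * K := by ring
        rw [this, hcK]
        linarith [hc2K]
      -- conclude
      have final : c ≤ (1 - c) ^ k := by
        have p1 : Real.exp (-(c + 2 * c ^ 2)) ^ k ≤ (1 - c) ^ k :=
          pow_le_pow_left₀ (by positivity) step1 k
        have p2 : Real.exp (-L + (ε / 2) * L) ≤
            Real.exp (-((c + 2 * c ^ 2) * K)) := Real.exp_le_exp.mpr step3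
        have p3 : c ≤ Real.exp (-L + (ε / 2) * L) := by
          have q2 : Real.exp (-L) = 1 / K := by
            rw [Real.exp_neg, hLdef, ← hKdef, Real.exp_log hK0, one_div]
          have q1 : Real.exp (-L + (ε / 2) * L) = 1 / K * Real.exp ((ε / 2) * L) := by
            rw [Real.exp_add, q2]
          have q3 : L ≤ Real.exp ((ε / 2) * L) := by
            calc L = Real.exp (Real.log L) := (Real.exp_log hL0).symm
              _ ≤ _ := Real.exp_le_exp.mpr hB
          have hcLK2 : c ≤ L / K := by
            rw [hcdef, div_le_div_iff₀ hK0 hK0]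
            nlinarith [mul_pos hL0 hK0]
          calc c ≤ L / K := hcLK2
            _ = 1 / K * L := by ring
            _ ≤ 1 / K * Real.exp ((ε / 2) * L) :=
              mul_le_mul_of_nonneg_left q3 (by positivity)
            _ = Real.exp (-L + (ε / 2) * L) := q1.symm
        calc c ≤ Real.exp (-L + (ε / 2) * L) := p3
          _ ≤ Real.exp (-((c + 2 * c ^ 2) * K)) := p2
          _ = Real.exp (-(c + 2 * c ^ 2)) ^ k := step2.symm
          _ ≤ (1 - c) ^ k := p1
      exact final
    -- combine
    have u1 : K * t ≤ (1 + ε) * L := by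
      have := (le_div_iff₀ hK0).mp hup
      linarith
    have u2 : (1 - ε) * L ≤ K * t := by
      have := (div_le_iff₀ hK0).mp hlow
      linarith
    have d1 : (1 - ε) ≤ K * t / L := (le_div_iff₀ hL0).mpr (by linarith)
    have d2 : K * t / L ≤ 1 + ε := (div_le_iff₀ hL0).mpr (by linarith)
    rw [abs_le]
    constructor <;> [linarith [d1]; linarith [d2]]
  rw [Metric.tendsto_atTop]
  intro ε hε
  have h1 : 0 < min (ε / 2) (1 / 2) := lt_min (by linarith) (by norm_num)
  have h2 : min (ε / 2) (1 / 2) < 1 := lt_of_le_of_lt (min_le_right _ _) (by norm_num)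
  obtain ⟨N, hN⟩ := eventually_atTop.mp (key _ h1 h2)
  refine ⟨N, fun n hn => ?_⟩
  rw [Real.dist_eq]
  calc |(n : ℝ) * (1 - a n) / Real.log n - 1| ≤ min (ε / 2) (1 / 2) := hN n hn
    _ ≤ ε / 2 := min_le_left _ _
    _ < ε := by linarith

/-- uniqueness of root > 1 of x^(k-1)(x-1) = 1 -/
private lemma uniq_root {k : ℕ} {x y : ℝ} (hx : 1 < x) (hy : 1 < y)
    (hxe : x ^ (k - 1) * (x - 1) = 1) (hye : y ^ (k - 1) * (y - 1) = 1) : x = y := by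
  rcases lt_trichotomy x y with h | h | h
  · exfalso
    have h1 : x ^ (k - 1) ≤ y ^ (k - 1) := pow_le_pow_left₀ (by linarith) (le_of_lt h) _
    have h2 : x ^ (k - 1) * (x - 1) < y ^ (k - 1) * (y - 1) :=
      mul_lt_mul' h1 (by linarith) (by linarith) (by positivity)
    rw [hxe, hye] at h2; exact lt_irrefl 1 h2
  · exact h
  · exfalso
    have h1 : y ^ (k - 1) ≤ x ^ (k - 1) := pow_le_pow_left₀ (by linarith) (le_of_lt h) _
    have h2 : y ^ (k - 1) * (y - 1) < x ^ (k - 1) * (x - 1) :=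
      mul_lt_mul' h1 (by linarith) (by linarith) (by positivity)
    rw [hxe, hye] at h2; exact lt_irrefl 1 h2

/-- Asymptotics of the roots: if `a k` is the root of `X^k + X - 1` in `(0,1)`
and `b k` the positive root of `X^k - X^{k-1} - 1`, then
`β_k = 1 + ln k / k + o(ln k / k)` and `α_k = 1 - ln k / k + o(ln k / k)`,
i.e. `k (b k - 1) / ln k → 1` and `k (1 - a k) / ln k → 1`. -/
theorem alpha_beta_asymptotics (a b : ℕ → ℝ)
    (ha : ∀ k : ℕ, 1 ≤ k → a k ∈ Set.Ioo (0 : ℝ) 1 ∧ a k ^ k + a k - 1 = 0)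
    (hb : ∀ k : ℕ, 1 ≤ k → 0 < b k ∧ b k ^ k - b k ^ (k - 1) - 1 = 0) :
    Tendsto (fun k : ℕ => k * (b k - 1) / Real.log k) atTop (nhds 1) ∧
    Tendsto (fun k : ℕ => k * (1 - a k) / Real.log k) atTop (nhds 1) := by
  have hA := tendsto_key a ha
  -- b k = (a k)⁻¹
  have hab : ∀ k : ℕ, 1 ≤ k → b k = (a k)⁻¹ := by
    intro k hk
    obtain ⟨⟨ha0, ha1⟩, haeq⟩ := ha k hk
    obtain ⟨hb0, hbeq⟩ := hb k hk
    have hksub : k - 1 + 1 = k := Nat.succ_pred_eq_of_pos hk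
    have hak : a k ^ k = 1 - a k := by linarith
    have hane : a k ≠ 0 := ne_of_gt ha0
    -- b k satisfies x^(k-1)(x-1) = 1
    have hbk : b k ^ (k - 1) * (b k - 1) = 1 := by
      have : b k ^ k = b k ^ (k - 1) * b k := by
        rw [← pow_succ, hksub]
      nlinarith [hbeq, this]
    have hb1 : 1 < b k := by
      by_contra h
      push_neg at h
      have h1 : 0 < b k ^ (k - 1) := pow_pos hb0 _
      nlinarith
    -- (a k)⁻¹ satisfies the same
    have hik : (a k)⁻¹ ^ (k - 1) * ((a k)⁻¹ - 1) = 1 := by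
      have hik0 : a k ^ (k - 1) * a k = a k ^ k := by
        rw [← pow_succ, hksub]
      rw [inv_pow]
      field_simp
      nlinarith [hik0, hak]
    have hi1 : 1 < (a k)⁻¹ := by
      nlinarith [mul_inv_cancel₀ hane, inv_pos.mpr ha0]
    exact uniq_root hb1 hi1 hbk hik
  -- a k → 1
  have hlog_div : Tendsto (fun k : ℕ => Real.log k / k) atTop (nhds 0) := by
    have h := Real.isLittleO_log_id_atTop.tendsto_div_nhds_zero
    exact h.comp tendsto_natCast_atTop_atTop
  have ha1' : Tendsto (fun k : ℕ => a k) atTop (nhds 1) := by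
    have ht : Tendsto (fun k : ℕ => 1 - a k) atTop (nhds 0) := by
      have heq : ∀ᶠ k : ℕ in atTop, (k * (1 - a k) / Real.log k) * (Real.log k / k)
          = 1 - a k := by
        filter_upwards [eventually_ge_atTop 3] with k hk3
        have hk0 : (0:ℝ) < k := by positivity
        have hk3' : (3:ℝ) ≤ k := by exact_mod_cast hk3
        have hL0 : (0:ℝ) < Real.log k := Real.log_pos (by linarith)
        field_simp
      have := hA.mul hlog_div
      rw [mul_zero] at this
      exact Tendsto.congr' heq this
    have : Tendsto (fun k : ℕ => 1 - (1 - a k)) atTop (nhds (1 - 0)) :=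
      tendsto_const_nhds.sub ht
    simpa using this
  constructor
  · -- b part
    have heq : ∀ᶠ k : ℕ in atTop, (k * (1 - a k) / Real.log k) * (a k)⁻¹
        = k * (b k - 1) / Real.log k := by
      filter_upwards [eventually_ge_atTop 1] with k hk1
      obtain ⟨⟨ha0, _⟩, _⟩ := ha k hk1
      have hane : a k ≠ 0 := ne_of_gt ha0
      rw [hab k hk1]
      field_simp
    have := hA.mul (ha1'.inv₀ one_ne_zero)
    rw [inv_one, mul_one] at this
    exact Tendsto.congr' heq this
  · exact hA
end

section
/- For every integer k ≥ 1, every complex root z of the polynomial Q_k(X) = X^k − X^{k−1} − 1 with z ≠ β_k satisfies |z| < β_k; that is, β_k is the strictly dominant root of Q_k. -/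
/-- `β_k`, the unique positive real root of `Q_k(X) = X^k - X^{k-1} - 1`, is
the strictly dominant root: any other complex root `z` satisfies `|z| < β_k`. -/
theorem beta_dominant_root (k : ℕ) (hk : 1 ≤ k) (β : ℝ) (hβ : 0 < β)
    (hβroot : β ^ k - β ^ (k - 1) - 1 = 0)
    (z : ℂ) (hz : z ^ k - z ^ (k - 1) - 1 = 0) (hne : z ≠ (β : ℂ)) :
    ‖z‖ < β := by
  obtain ⟨m, rfl⟩ : ∃ m, k = m + 1 := ⟨k - 1, (Nat.succ_pred_eq_of_pos hk).symm⟩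
  simp only [Nat.add_sub_cancel] at hβroot hz
  rcases Nat.eq_zero_or_pos m with rfl | hm
  · exfalso
    simp only [zero_add, pow_one, pow_zero] at hβroot hz
    have hβ2 : β = 2 := by linarith
    have hz2 : z = 2 := by linear_combination hz
    apply hne
    rw [hz2, hβ2]; norm_num
  · have hβ1 : β ^ m * (β - 1) = 1 := by linear_combination hβroot
    have hpow : (0:ℝ) < β ^ m := pow_pos hβ m
    have hβgt : 1 < β := by nlinarith
    have hz1 : z ^ m * (z - 1) = 1 := by linear_combination hz
    have habs : ‖z‖ ^ m * ‖z - 1‖ = 1 := by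
      have := congrArg (‖·‖) hz1
      simpa [map_mul, map_pow] using this
    set r := ‖z‖ with hr
    by_contra hlt
    push_neg at hlt
    have htri : r - 1 ≤ ‖z - 1‖ := by
      simpa using norm_sub_norm_le z 1
    have hr1 : 1 < r := lt_of_lt_of_le hβgt hlt
    have hrpow : (0:ℝ) < r ^ m := pow_pos (by linarith) m
    have h1 : r ^ m * (r - 1) ≤ 1 := by
      calc r ^ m * (r - 1) ≤ r ^ m * ‖z - 1‖ :=
            mul_le_mul_of_nonneg_left htri (le_of_lt hrpow)
        _ = 1 := habs
    have hreq : r = β := by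
      refine le_antisymm ?_ hlt
      by_contra hgt
      push_neg at hgt
      have hp : β ^ m < r ^ m := pow_lt_pow_left₀ hgt hβ.le hm.ne'
      have : β ^ m * (β - 1) < r ^ m * (r - 1) :=
        mul_lt_mul hp (by linarith) (by linarith) (le_of_lt hrpow)
      linarith
    have hzm : ‖z - 1‖ = β - 1 := by
      rw [hreq] at habs
      have := habs.trans hβ1.symm
      exact mul_left_cancel₀ (ne_of_gt hpow) this
    have e1 : z.re * z.re + z.im * z.im = β ^ 2 := by
      have := Complex.sq_norm z
      rw [Complex.normSq_apply] at this
      rw [← hr, hreq] at this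
      linarith
    have e2 : (z.re - 1) * (z.re - 1) + z.im * z.im = (β - 1) ^ 2 := by
      have := Complex.sq_norm (z - 1)
      rw [Complex.normSq_apply, hzm] at this
      simp only [Complex.sub_re, Complex.sub_im, Complex.one_re, Complex.one_im, sub_zero] at this
      linarith
    have hre : z.re = β := by nlinarith
    have him : z.im = 0 := by nlinarith
    apply hne
    apply Complex.ext
    · simpa using hre
    · simpa using him
end

section
/- Concerning the secondary complex roots of Q_k(X) = X^k − X^{k−1} − 1: (i) for k ∈ {2, 3, 4}, every complex root z of Q_k with z ≠ β_k satisfies |z| < 1; (ii) for k = 5, the maximum of |z| over roots z ≠ β_5 equals 1 (attained at e^{±iπ/3}); (iii) for every k ≥ 6, there exists a complex root z of Q_k with z ≠ β_k and |z| > 1. -/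
set_option maxHeartbeats 1000000

open Real

/-- A root of a real-coefficient quadratic with negative discriminant has `|z|² = q`. -/
lemma quad_root_abs (p q : ℝ) (h : p^2 < 4*q) (z : ℂ)
    (hz : z^2 + (p:ℂ)*z + (q:ℂ) = 0) : ‖z‖^2 = q := by
  have h1 := congrArg Complex.re hz
  have h2 := congrArg Complex.im hz
  simp [pow_two, Complex.add_re, Complex.add_im, Complex.mul_re, Complex.mul_im] at h1 h2
  set x := z.re
  set y := z.im
  have hy : y ≠ 0 := by
    intro hy0
    rw [hy0] at h1
    nlinarith [sq_nonneg (2*x + p)]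
  have hx : 2*x + p = 0 := by
    rcases mul_eq_zero.mp (show y * (2*x + p) = 0 by linarith [h2]) with h | h
    · exact absurd h hy
    · exact h
  have habs : ‖z‖^2 = x^2 + y^2 := by
    rw [Complex.sq_norm, Complex.normSq_apply]; ring
  have hpx : p * x = -2*(x*x) := by
    have hp : p = -2*x := by linarith
    rw [hp]; ring
  rw [habs]; nlinarith [h1, hpx]
set_option maxHeartbeats 1000000

open Real

lemma sin_lt_sin' {x y : ℝ} (hx : 0 < x) (hxy : x < y) (hy : y < π - x) :
    Real.sin x < Real.sin y := by
  have key : Real.sin y - Real.sin x = 2 * Real.sin ((y - x)/2) * Real.cos ((y + x)/2) :=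
    Real.sin_sub_sin y x
  have h1 : 0 < Real.sin ((y - x)/2) := by
    apply Real.sin_pos_of_pos_of_lt_pi
    · linarith
    · nlinarith [Real.pi_pos, hx, hy]
  have h2 : 0 < Real.cos ((y + x)/2) := by
    apply Real.cos_pos_of_mem_Ioo
    constructor
    · nlinarith [Real.pi_pos]
    · nlinarith
  nlinarith

lemma ivt_zero {f : ℝ → ℝ} (hf : Continuous f) {a b : ℝ} (hab : a < b)
    (h : f a * f b < 0) : ∃ c ∈ Set.Ioo a b, f c = 0 := by
  rcases lt_or_ge (f a) 0 with ha | ha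
  · have hb : 0 < f b := by nlinarith
    obtain ⟨c, hc, hfc⟩ := intermediate_value_Ioo hab.le hf.continuousOn
      (show (0:ℝ) ∈ Set.Ioo (f a) (f b) from ⟨ha, hb⟩)
    exact ⟨c, hc, hfc⟩
  · have ha' : 0 < f a := by
      rcases ha.lt_or_eq with h' | h'
      · exact h'
      · exfalso; rw [← h'] at h; simp at h
    have hb : f b < 0 := by nlinarith
    obtain ⟨c, hc, hfc⟩ := intermediate_value_Ioo' hab.le hf.continuousOn
      (show (0:ℝ) ∈ Set.Ioo (f b) (f a) from ⟨hb, ha'⟩)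
    exact ⟨c, hc, hfc⟩

lemma sin_eq_neg_sub_pi (x : ℝ) : Real.sin x = -Real.sin (x - π) := by
  have h3 : Real.sin ((x - π) + π) = -Real.sin (x - π) := by
    rw [Real.sin_add]; simp
  rw [show (x - π) + π = x by ring] at h3
  exact h3

lemma sin_neg_of_pi_lt {x : ℝ} (h1 : π < x) (h2 : x < 2*π) : Real.sin x < 0 := by
  have h : 0 < Real.sin (x - π) := Real.sin_pos_of_pos_of_lt_pi (by linarith) (by linarith)
  rw [sin_eq_neg_sub_pi x]; linarith

lemma exists_big_root (m : ℕ) (hm : 5 ≤ m) :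
    ∃ z : ℂ, z^(m+1) - z^m - 1 = 0 ∧ z.im ≠ 0 ∧ 1 < ‖z‖ := by
  have hπ := Real.pi_pos
  have hM5 : (5:ℝ) ≤ (m:ℝ) := by exact_mod_cast hm
  set M : ℝ := (m:ℝ) with hMdef
  have hM0 : (0:ℝ) < M := by linarith
  set a : ℝ := π / M with hadef
  set c : ℝ := 2*π / (M + 2) with hcdef
  have ha0 : 0 < a := by positivity
  have hc0 : 0 < c := by positivity
  have hac : a < c := by
    rw [hadef, hcdef, div_lt_div_iff₀ hM0 (by linarith)]
    nlinarith
  have hcπ2 : c < π/2 := by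
    rw [hcdef, div_lt_div_iff₀ (by linarith) (by norm_num)]
    nlinarith
  have h3c : 3*c < π := by
    rw [hcdef, show (3:ℝ)*(2*π/(M+2)) = 6*π/(M+2) by ring, div_lt_iff₀ (by linarith)]
    nlinarith
  set G : ℝ → ℝ := fun θ => Real.sin ((M+1) * θ) ^ (m+1) + Real.sin θ * Real.sin (M * θ) ^ m
    with hGdef
  have hGcont : Continuous G := by fun_prop
  -- endpoint values
  have hMa : M * a = π := by rw [hadef]; field_simp
  have hM1a : (M+1) * a = π + a := by rw [hadef]; field_simp
  have hGa : G a = (- Real.sin a)^(m+1) := by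
    rw [hGdef]
    simp only [hMa, hM1a]
    rw [show Real.sin (π + a) = -Real.sin a by rw [Real.sin_add]; simp]
    simp [Real.sin_pi, zero_pow (by omega : m ≠ 0)]
  have hM1c : (M+1) * c = 2*π - c := by rw [hcdef]; field_simp; ring
  have hMc : M * c = 2*π - 2*c := by rw [hcdef]; field_simp; ring
  have hGc : G c = (- Real.sin c)^(m+1) + Real.sin c * (- Real.sin (2*c))^m := by
    rw [hGdef]
    simp only [hM1c, hMc]
    rw [Real.sin_two_pi_sub, Real.sin_two_pi_sub]
  -- signs of endpoint values
  have hsa : 0 < Real.sin a := by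
    apply Real.sin_pos_of_pos_of_lt_pi ha0
    rw [hadef, div_lt_iff₀ hM0]; nlinarith
  have hsc : 0 < Real.sin c := Real.sin_pos_of_pos_of_lt_pi hc0 (by linarith)
  have hs2c : 0 < Real.sin (2*c) := Real.sin_pos_of_pos_of_lt_pi (by linarith) (by linarith)
  have hslt : Real.sin c < Real.sin (2*c) := sin_lt_sin' hc0 (by linarith) (by linarith)
  -- product of endpoint values is negative
  have hprod : G a * G c < 0 := by
    rw [hGa, hGc]
    have e1 : (-Real.sin a)^(m+1) * (-Real.sin c)^(m+1)
        = (Real.sin a * Real.sin c)^(m+1) := by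
      rw [← mul_pow, neg_mul_neg]
    have e2 : (-Real.sin a)^(m+1) * (-Real.sin (2*c))^m
        = -(Real.sin a * (Real.sin a * Real.sin (2*c))^m) := by
      rw [pow_succ]
      calc (-Real.sin a)^m * (-Real.sin a) * (-Real.sin (2*c))^m
          = ((-Real.sin a) * (-Real.sin (2*c)))^m * (-Real.sin a) := by
            rw [mul_pow]; ring
        _ = -(Real.sin a * (Real.sin a * Real.sin (2*c))^m) := by
            rw [neg_mul_neg]; ring
    have expand : (-Real.sin a)^(m+1) * ((-Real.sin c)^(m+1)
        + Real.sin c * (-Real.sin (2*c))^m)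
        = (Real.sin a * Real.sin c)^(m+1)
          - Real.sin c * (Real.sin a * (Real.sin a * Real.sin (2*c))^m) := by
      rw [mul_add, e1, ← mul_assoc]
      rw [show (-Real.sin a)^(m+1) * Real.sin c = Real.sin c * (-Real.sin a)^(m+1) by ring]
      rw [mul_assoc, e2]; ring
    rw [expand]
    have key : (Real.sin a * Real.sin c)^(m+1)
        < Real.sin c * (Real.sin a * (Real.sin a * Real.sin (2*c))^m) := by
      rw [pow_succ]
      have h1 : (Real.sin a * Real.sin c)^m < (Real.sin a * Real.sin (2*c))^m := by
        apply pow_lt_pow_left₀ _ (by positivity) (by omega)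
        nlinarith
      have h2 : (Real.sin a * Real.sin c) * ((Real.sin a * Real.sin c)^m)
          < (Real.sin a * Real.sin c) * ((Real.sin a * Real.sin (2*c))^m) :=
        mul_lt_mul_of_pos_left h1 (mul_pos hsa hsc)
      nlinarith [h2]
    linarith
  -- IVT
  obtain ⟨θ, ⟨hθa, hθc⟩, hGθ0⟩ := ivt_zero hGcont hac hprod
  have hθ0 : 0 < θ := lt_trans ha0 hθa
  have hθπ2 : θ < π/2 := lt_trans hθc hcπ2
  have hsθ : 0 < Real.sin θ := Real.sin_pos_of_pos_of_lt_pi hθ0 (by linarith)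
  -- angle ranges
  have hMθ1 : π < M * θ := by
    calc π = M * a := hMa.symm
    _ < M * θ := by exact mul_lt_mul_of_pos_left hθa hM0
  have hMθ2 : M * θ < 2*π := by
    have : M * θ < M * c := mul_lt_mul_of_pos_left hθc hM0
    rw [hMc] at this; linarith
  have hKθ1 : π < (M+1) * θ := by
    have e : (M+1)*θ = M*θ + θ := by ring
    linarith
  have hKθ2 : (M+1) * θ < 2*π := by
    have : (M+1) * θ < (M+1) * c := mul_lt_mul_of_pos_left hθc (by linarith)
    rw [hM1c] at this; linarith
  have hsK : Real.sin ((M+1)*θ) < 0 := sin_neg_of_pi_lt hKθ1 hKθ2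
  have hsM : Real.sin (M*θ) < 0 := sin_neg_of_pi_lt hMθ1 hMθ2
  -- the key inequality  sin θ < - sin ((M+1) θ)
  have hkey : Real.sin θ < - Real.sin ((M+1)*θ) := by
    rw [sin_eq_neg_sub_pi ((M+1)*θ), neg_neg]
    apply sin_lt_sin' hθ0
    · nlinarith
    · have : (M+2) * θ < (M+2) * c := mul_lt_mul_of_pos_left hθc (by linarith)
      rw [hcdef] at this
      rw [show (M+2) * (2*π/(M+2)) = 2*π by field_simp] at this
      nlinarith
  -- define r
  set r : ℝ := Real.sin ((M+1)*θ) / Real.sin (M*θ) with hrdef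
  have hr0 : 0 < r := div_pos_of_neg_of_neg hsK hsM
  have hr1 : r * Real.sin (M*θ) = Real.sin ((M+1)*θ) := by
    rw [hrdef, div_mul_cancel₀ _ hsM.ne]
  have hrm : r ^ m * Real.sin ((M+1)*θ) = - Real.sin θ := by
    have hG' : Real.sin ((M+1) * θ) ^ (m+1) + Real.sin θ * Real.sin (M * θ) ^ m = 0 := hGθ0
    rw [hrdef, div_pow]
    rw [div_mul_eq_mul_div, div_eq_iff (pow_ne_zero m hsM.ne)]
    linear_combination hG'
  have hrmlt : r ^ m < 1 := by
    have h2 : r^m * (-Real.sin ((M+1)*θ)) = Real.sin θ := by linarith [hrm]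
    have h3 : r^m * (-Real.sin ((M+1)*θ)) < 1 * (-Real.sin ((M+1)*θ)) := by
      rw [h2, one_mul]; exact hkey
    exact lt_of_mul_lt_mul_right h3 (by linarith)
  have hrlt1 : r < 1 := by
    by_contra hcon
    push_neg at hcon
    have : (1:ℝ) ≤ r^m := one_le_pow₀ hcon
    linarith
  -- auxiliary real identities
  have him : r^(m+1) * Real.sin ((M+1)*θ) + r * Real.sin θ = 0 := by
    linear_combination r * hrm
  have hsub : Real.sin (M*θ)
      = Real.sin ((M+1)*θ) * Real.cos θ - Real.cos ((M+1)*θ) * Real.sin θ := by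
    rw [show M*θ = (M+1)*θ - θ by ring, Real.sin_sub]
  have hre : r^(m+1) * Real.cos ((M+1)*θ) + r * Real.cos θ - 1 = 0 := by
    have hmul : (r^(m+1) * Real.cos ((M+1)*θ) + r * Real.cos θ - 1)
        * Real.sin ((M+1)*θ) = 0 := by
      linear_combination (r * Real.cos ((M+1)*θ)) * hrm + hr1 - r * hsub
    rcases mul_eq_zero.mp hmul with h | h
    · exact h
    · exact absurd h hsK.ne
  -- the complex number w
  set w : ℂ := (r:ℂ) * Complex.exp ((θ:ℂ) * Complex.I) with hwdef
  have habsw : ‖w‖ = r := by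
    rw [hwdef, norm_mul, Complex.norm_exp]
    simp [abs_of_pos hr0]
  have hw0 : w ≠ 0 := by
    intro h
    rw [h, norm_zero] at habsw
    exact hr0.ne habsw
  have hwc : w = ((r * Real.cos θ : ℝ):ℂ) + ((r * Real.sin θ : ℝ):ℂ) * Complex.I := by
    rw [hwdef, Complex.exp_mul_I, ← Complex.ofReal_cos, ← Complex.ofReal_sin]
    push_cast
    ring
  have hwpow : w^(m+1) = ((r^(m+1) * Real.cos ((M+1)*θ) : ℝ):ℂ)
      + ((r^(m+1) * Real.sin ((M+1)*θ) : ℝ):ℂ) * Complex.I := by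
    rw [hwdef, mul_pow, ← (Complex.exp_nat_mul ((θ:ℂ) * Complex.I) (m+1))]
    rw [show ((m+1 : ℕ):ℂ) * ((θ:ℂ) * Complex.I) = ((((M+1)*θ : ℝ)):ℂ) * Complex.I by
      rw [hMdef]; push_cast; ring]
    rw [Complex.exp_mul_I, ← Complex.ofReal_cos, ← Complex.ofReal_sin]
    push_cast
    ring
  have hweq : w^(m+1) + w - 1 = 0 := by
    have e : w^(m+1) + w - 1
        = ((r^(m+1) * Real.cos ((M+1)*θ) + r * Real.cos θ - 1 : ℝ):ℂ)
          + ((r^(m+1) * Real.sin ((M+1)*θ) + r * Real.sin θ : ℝ):ℂ) * Complex.I := by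
      rw [hwpow, hwc]
      push_cast
      ring
    rw [e, hre, him]
    simp
  refine ⟨w⁻¹, ?_, ?_, ?_⟩
  · have e1 : w^(m+1) * (w⁻¹)^(m+1) = 1 := by
      rw [← mul_pow, mul_inv_cancel₀ hw0, one_pow]
    have e2 : w^(m+1) * (w⁻¹)^m = w := by
      rw [pow_succ]
      calc w^m * w * (w⁻¹)^m = (w * w⁻¹)^m * w := by rw [mul_pow]; ring
      _ = w := by rw [mul_inv_cancel₀ hw0, one_pow, one_mul]
    have key : w^(m+1) * ((w⁻¹)^(m+1) - (w⁻¹)^m - 1) = 0 := by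
      have e3 : w^(m+1) * ((w⁻¹)^(m+1) - (w⁻¹)^m - 1) = -(w^(m+1) + w - 1) := by
        linear_combination e1 - e2
      rw [e3, hweq, neg_zero]
    rcases mul_eq_zero.mp key with h | h
    · exact absurd h (pow_ne_zero _ hw0)
    · exact h
  · have hinvim : (w⁻¹).im = -w.im / Complex.normSq w := Complex.inv_im w
    have hwim : w.im = r * Real.sin θ := by
      rw [hwc]
      simp only [Complex.add_im, Complex.mul_im, Complex.ofReal_re, Complex.ofReal_im,
        Complex.I_re, Complex.I_im]
      ring
    have hns : 0 < Complex.normSq w := Complex.normSq_pos.mpr hw0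
    rw [hinvim, hwim]
    have : 0 < r * Real.sin θ := mul_pos hr0 hsθ
    intro hcontra
    rw [div_eq_zero_iff] at hcontra
    rcases hcontra with h | h
    · linarith
    · linarith
  · rw [norm_inv, habsw]
    exact (one_lt_inv₀ hr0).mpr hrlt1

/-- Secondary roots of `Q_k(X) = X^k - X^{k-1} - 1` (with `β_k` its unique
positive real root): (i) for `k ∈ {2,3,4}` all roots `≠ β_k` have modulus `< 1`;
(ii) for `k = 5` the maximal modulus of the roots `≠ β_5` is exactly `1`,
attained at `e^{iπ/3}`; (iii) for `k ≥ 6` some root `≠ β_k` has modulus `> 1`. -/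
theorem secondary_roots_modulus :
    (∀ k ∈ ({2, 3, 4} : Set ℕ), ∀ β : ℝ, 0 < β → β ^ k - β ^ (k - 1) - 1 = 0 →
      ∀ z : ℂ, z ^ k - z ^ (k - 1) - 1 = 0 → z ≠ (β : ℂ) → ‖z‖ < 1) ∧
    (∀ β : ℝ, 0 < β → β ^ 5 - β ^ 4 - 1 = 0 →
      (∀ z : ℂ, z ^ 5 - z ^ 4 - 1 = 0 → z ≠ (β : ℂ) → ‖z‖ ≤ 1) ∧
      (Complex.exp (Real.pi / 3 * Complex.I) ^ 5
        - Complex.exp (Real.pi / 3 * Complex.I) ^ 4 - 1 = 0 ∧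
       Complex.exp (Real.pi / 3 * Complex.I) ≠ (β : ℂ) ∧
       ‖Complex.exp (Real.pi / 3 * Complex.I)‖ = 1)) ∧
    (∀ k : ℕ, 6 ≤ k → ∀ β : ℝ, 0 < β → β ^ k - β ^ (k - 1) - 1 = 0 →
      ∃ z : ℂ, z ^ k - z ^ (k - 1) - 1 = 0 ∧ z ≠ (β : ℂ) ∧ 1 < ‖z‖) := by
  refine ⟨?_, ?_, ?_⟩
  · -- Part (i): k ∈ {2,3,4}
    intro k hk β hβ0 hβ z hz hzβ
    simp only [Set.mem_insert_iff, Set.mem_singleton_iff] at hk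
    have hβc : ((β:ℂ)) ^ k - (β:ℂ) ^ (k-1) - 1 = 0 := by
      have := congrArg (fun x : ℝ => (x : ℂ)) hβ
      push_cast at this
      simpa using this
    rcases hk with rfl | rfl | rfl
    · -- k = 2
      norm_num at hβ hβc hz
      have hβ1 : 1 < β := by nlinarith
      have hβ2 : β < 2 := by nlinarith
      have hfac : (z - (β:ℂ)) * (z - (1 - (β:ℂ))) = 0 := by
        linear_combination hz - hβc
      rcases mul_eq_zero.mp hfac with h | h
      · exact absurd (sub_eq_zero.mp h) hzβ
      · have hz1 : z = 1 - (β:ℂ) := sub_eq_zero.mp h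
        have : z = (((1 - β : ℝ)):ℂ) := by rw [hz1]; push_cast; ring
        rw [this, Complex.norm_real, Real.norm_eq_abs, abs_of_neg (by linarith)]
        linarith
    · -- k = 3
      norm_num at hβ hβc hz
      have hβ1 : 1 < β := by nlinarith
      have hq : β^2 - β < 1 := by nlinarith
      have hd : (β-1)^2 < 4*(β^2-β) := by nlinarith
      have hfac : (z - (β:ℂ)) * (z^2 + ((β:ℂ)-1)*z + ((β:ℂ)^2-(β:ℂ))) = 0 := by
        linear_combination hz - hβc
      rcases mul_eq_zero.mp hfac with h | h
      · exact absurd (sub_eq_zero.mp h) hzβ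
      · have h' : z^2 + (((β-1:ℝ)):ℂ)*z + (((β^2-β:ℝ)):ℂ) = 0 := by
          push_cast
          linear_combination h
        have := quad_root_abs (β-1) (β^2-β) hd z h'
        nlinarith [norm_nonneg z]
    · -- k = 4
      norm_num at hβ hβc hz
      have hcube : (0:ℝ) < β^3 := by positivity
      have hfacβ : β^3*(β-1) = 1 := by linear_combination hβ
      have hβ1 : 1 < β := by nlinarith [hfacβ, hcube]
      have hβ2 : β < 2 := by nlinarith [hfacβ, hcube, sq_nonneg (β-2), sq_nonneg (β+1), mul_pos hβ0 hβ0]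
      have hbne : (1:ℝ)/β < 1 := by
        rw [div_lt_one hβ0]; exact hβ1
      have hmb : (-1:ℝ) < -(1/β) := by linarith
      have hcont : Continuous (fun x : ℝ => x^4 - x^3 - 1) := by fun_prop
      have hivt : ∃ r ∈ Set.Ioo (-1:ℝ) (-(1/β)), (fun x : ℝ => x^4 - x^3 - 1) r = 0 := by
        apply ivt_zero hcont hmb
        have h1 : ((-1:ℝ))^4 - (-1:ℝ)^3 - 1 = 1 := by norm_num
        have h2 : (-(1/β))^4 - (-(1/β))^3 - 1 < 0 := by
          have hβ4 : (0:ℝ) < β^4 := by positivity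
          rw [show (-(1/β))^4 - (-(1/β))^3 - 1 = (1 + β - β^4)/β^4 by field_simp; ring]
          apply div_neg_of_neg_of_pos _ hβ4
          nlinarith [hβ, mul_pos hβ0 (show (0:ℝ) < β^2 - 1 by nlinarith)]
        simp only [h1]
        nlinarith
      obtain ⟨r, ⟨hr1, hr2⟩, hr⟩ := hivt
      simp only at hr
      have hr0 : r < 0 := by
        have : (0:ℝ) < 1/β := by positivity
        linarith
      have hβr : β - r ≠ 0 := by intro h; nlinarith
      -- coefficients of the cofactor quadratic
      have hs1 : ((β+r)^3 - (β+r)^2 - 2*(β+r)*(β*r) + β*r) * β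
          + (-1 - (β*r)*(β+r)^2 + (β*r)*(β+r) + (β*r)^2) = 0 := by
        linear_combination hβ
      have hs2 : ((β+r)^3 - (β+r)^2 - 2*(β+r)*(β*r) + β*r) * r
          + (-1 - (β*r)*(β+r)^2 + (β*r)*(β+r) + (β*r)^2) = 0 := by
        linear_combination hr
      have hA0 : (β+r)^3 - (β+r)^2 - 2*(β+r)*(β*r) + β*r = 0 := by
        have h := sub_eq_zero.mpr (hs1.trans hs2.symm)
        have h' : ((β+r)^3 - (β+r)^2 - 2*(β+r)*(β*r) + β*r) * (β - r) = 0 := by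
          linear_combination h
        rcases mul_eq_zero.mp h' with h'' | h''
        · exact h''
        · exact absurd h'' hβr
      have hB0 : -1 - (β*r)*(β+r)^2 + (β*r)*(β+r) + (β*r)^2 = 0 := by
        linear_combination hs1 - β * hA0
      set c1 : ℝ := β + r - 1 with hc1def
      set c0 : ℝ := β^2 + β*r + r^2 - β - r with hc0def
      have hc0 : (β*r)*c0 = -1 := by
        rw [hc0def]; linear_combination -hB0
      -- bounds
      have hbr1 : 1 < β*(-r) := by
        have := mul_lt_mul_of_pos_left hr2 hβ0
        rw [mul_neg, mul_one_div, div_self hβ0.ne'] at this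
        linarith
      have hbr2 : β*(-r) < 2 := by nlinarith
      have hc0gt : 1/2 < c0 := by nlinarith
      have hc0lt : c0 < 1 := by nlinarith
      have hc1b : c1^2 < 1 := by
        rw [hc1def]; nlinarith
      have hdisc : c1^2 < 4*c0 := by linarith
      -- complex factorization
      have hA0c : (((β+r)^3 - (β+r)^2 - 2*(β+r)*(β*r) + β*r : ℝ) : ℂ) = 0 := by
        rw [hA0]; norm_num
      have hB0c : ((-1 - (β*r)*(β+r)^2 + (β*r)*(β+r) + (β*r)^2 : ℝ) : ℂ) = 0 := by
        rw [hB0]; norm_num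
      have hfac : (z - (β:ℂ)) * (z - (r:ℂ)) * (z^2 + ((c1:ℝ):ℂ)*z + ((c0:ℝ):ℂ)) = 0 := by
        rw [hc1def, hc0def]
        push_cast
        push_cast at hA0c hB0c
        linear_combination hz - z * hA0c - hB0c
      rcases mul_eq_zero.mp hfac with h | h
      · rcases mul_eq_zero.mp h with h' | h'
        · exact absurd (sub_eq_zero.mp h') hzβ
        · have hz1 : z = (r:ℂ) := sub_eq_zero.mp h'
          rw [hz1, Complex.norm_real, Real.norm_eq_abs, abs_of_neg hr0]
          linarith
      · have := quad_root_abs c1 c0 hdisc z h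
        nlinarith [norm_nonneg z]
  · -- Part (ii): k = 5
    intro β hβ0 hβ
    have hpos : (0:ℝ) < β^2 - β + 1 := by nlinarith [sq_nonneg (2*β - 1)]
    have hcube : β^3 - β - 1 = 0 := by
      have h : (β^2 - β + 1) * (β^3 - β - 1) = 0 := by linear_combination hβ
      rcases mul_eq_zero.mp h with h' | h'
      · exact absurd h' hpos.ne'
      · exact h'
    have hβ1 : 1 < β := by nlinarith
    have hblt : β^2 - 1 < 1 := by nlinarith
    have hbgt : β^2 < 4*(β^2 - 1) := by nlinarith
    have hcubec : ((β:ℂ))^3 - (β:ℂ) - 1 = 0 := by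
      have := congrArg (fun x : ℝ => (x : ℂ)) hcube
      push_cast at this
      simpa using this
    constructor
    · intro z hz hzβ
      have hfac : (z^2 - z + 1) * (z^3 - z - 1) = 0 := by linear_combination hz
      rcases mul_eq_zero.mp hfac with h | h
      · have h' : z^2 + (((-1:ℝ)):ℂ)*z + (((1:ℝ)):ℂ) = 0 := by
          push_cast
          linear_combination h
        have := quad_root_abs (-1) 1 (by norm_num) z h'
        nlinarith [norm_nonneg z]
      · have hfac2 : (z - (β:ℂ)) * (z^2 + (β:ℂ)*z + ((β:ℂ)^2 - 1)) = 0 := by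
          linear_combination h - hcubec
        rcases mul_eq_zero.mp hfac2 with h' | h'
        · exact absurd (sub_eq_zero.mp h') hzβ
        · have h'' : z^2 + ((β:ℝ):ℂ)*z + (((β^2-1:ℝ)):ℂ) = 0 := by
            push_cast
            linear_combination h'
          have := quad_root_abs β (β^2-1) hbgt z h''
          nlinarith [norm_nonneg z]
    · -- the sixth root of unity
      set E : ℂ := Complex.exp (Real.pi / 3 * Complex.I) with hEdef
      have hsq3 : ((Real.sqrt 3 : ℝ):ℂ)^2 = 3 := by
        rw [← Complex.ofReal_pow, Real.sq_sqrt (by norm_num : (3:ℝ) ≥ 0)]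
        norm_num
      have hE : E = (1/2 : ℂ) + (((Real.sqrt 3 : ℝ):ℂ)/2) * Complex.I := by
        rw [hEdef]
        rw [show ((Real.pi : ℂ) / 3 * Complex.I) = ((Real.pi / 3 : ℝ) : ℂ) * Complex.I by
          push_cast; ring]
        rw [Complex.exp_mul_I, ← Complex.ofReal_cos, ← Complex.ofReal_sin,
          Real.cos_pi_div_three, Real.sin_pi_div_three]
        push_cast
        ring
      have he2 : E^2 - E + 1 = 0 := by
        rw [hE]
        linear_combination (Complex.I^2/4) * hsq3 + (3/4) * Complex.I_sq
      refine ⟨?_, ?_, ?_⟩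
      · linear_combination (E^3 - E - 1) * he2
      · intro h
        have him : E.im = Real.sqrt 3 / 2 := by
          rw [hE]
          simp [Complex.add_im, Complex.mul_im]
        have hpos3 : 0 < Real.sqrt 3 := Real.sqrt_pos.mpr (by norm_num)
        rw [h] at him
        simp [Complex.ofReal_im] at him
        linarith
      · rw [Complex.norm_exp]
        rw [show ((Real.pi : ℂ) / 3 * Complex.I).re = 0 by simp]
        exact Real.exp_zero
  · -- Part (iii): k ≥ 6
    intro k hk β hβ0 hβ
    obtain ⟨z, hz, him, habs⟩ := exists_big_root (k-1) (by omega)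
    have hkm : k - 1 + 1 = k := by omega
    rw [hkm] at hz
    refine ⟨z, hz, ?_, habs⟩
    intro h
    rw [h] at him
    simp at him
end

section
/- For every integer k ≥ 1 and every n ≥ 0, β_k^n ≤ A_{k,n}. -/
/-- `β_k^n ≤ A_{k,n}` where `β_k` is the unique positive real root of
`X^k - X^{k-1} - 1`. -/
theorem beta_pow_le_A (k : ℕ) (hk : 1 ≤ k) (β : ℝ) (hβ : 0 < β)
    (hβroot : β ^ k - β ^ (k - 1) - 1 = 0) (n : ℕ) :
    β ^ n ≤ A k n := by
  have hβk : β ^ k = β ^ (k - 1) + 1 := by linarith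
  have hb1 : 1 ≤ β := by
    by_contra h
    push_neg at h
    have h1 : β ^ k ≤ β ^ (k - 1) := pow_le_pow_of_le_one hβ.le h.le (by omega)
    linarith
  have h3 : β ^ (k - 1) * (β - 1) = 1 := by
    have hp : β ^ (k - 1) * β = β ^ k := by
      rw [← pow_succ]; congr 1; omega
    nlinarith [hp]
  have hsmall : ∀ m, m ≤ k → β ^ m ≤ (m : ℝ) + 1 := by
    intro m
    induction m with
    | zero => intro _; simp
    | succ p ih =>
      intro hmk
      have h1 : β ^ p ≤ (p : ℝ) + 1 := ih (by omega)
      have h2 : β ^ p ≤ β ^ (k - 1) := pow_le_pow_right₀ hb1 (by omega)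
      have h4 : β ^ p * (β - 1) ≤ 1 := by
        calc β ^ p * (β - 1) ≤ β ^ (k - 1) * (β - 1) := by nlinarith
        _ = 1 := h3
      have h5 : β ^ (p + 1) = β ^ p + β ^ p * (β - 1) := by ring
      push_cast
      linarith
  have hA : ∀ m, m < k → A k m = m + 1 := by
    intro m hm
    cases m with
    | zero => simp [A]
    | succ p => rw [A]; simp [hm]
  induction n using Nat.strong_induction_on with
  | _ n ih =>
    by_cases hn : n < k
    · rw [hA n hn]
      have := hsmall n (by omega)
      push_cast
      linarith
    · push_neg at hn
      obtain ⟨p, rfl⟩ : ∃ p, n = p + 1 := ⟨n - 1, by omega⟩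
      have hArec : A k (p + 1) = A k p + A k (p + 1 - k) := by
        rw [A]
        simp [Nat.not_lt.2 hn, Nat.max_eq_left hk]
      have hβrec : β ^ (p + 1) = β ^ p + β ^ (p + 1 - k) := by
        have h6 : β ^ (p + 1) = β ^ (p + 1 - k) * β ^ k := by
          rw [← pow_add]; congr 1; omega
        rw [h6, hβk, mul_add, mul_one]
        congr 1
        rw [← pow_add]; congr 1; omega
      rw [hArec, hβrec]
      push_cast
      have h1 := ih p (by omega)
      have h2 := ih (p + 1 - k) (by omega)
      linarith
end

section
/- For every integer k ≥ 1, the polynomial Q_k(X) = X^k − X^{k−1} − 1 has k distinct complex roots, and for every n ≥ 0 one has A_{k,n} = Σ_r c(r)·r^n, where the sum ranges over the k complex roots r of Q_k and c(r) = r^k / (k·r − (k−1)); moreover each coefficient c(r) is nonzero. -/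
set_option linter.unnecessarySeqFocus false

open Polynomial

/-- The polynomial `Q_k(X) = X^k - X^{k-1} - 1` over `ℂ`. -/
noncomputable def Q (k : ℕ) : Polynomial ℂ := X ^ k - X ^ (k - 1) - 1

lemma Q_eq (k : ℕ) : Q k = X ^ k - (X ^ (k-1) + 1) := by
  rw [Q]; ring

lemma Q_monic {k : ℕ} (hk : 1 ≤ k) : (Q k).Monic := by
  rw [Q_eq]
  apply monic_X_pow_sub
  calc ((X:ℂ[X]) ^ (k-1) + 1).degree ≤ max ((X:ℂ[X])^(k-1)).degree (1:ℂ[X]).degree :=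
        degree_add_le _ _
    _ < (k : WithBot ℕ) := by
        rw [degree_X_pow, degree_one]
        have h1 : ((k-1 : ℕ) : WithBot ℕ) < (k : WithBot ℕ) := by exact_mod_cast (by omega : k-1 < k)
        have h2 : (0 : WithBot ℕ) < (k : WithBot ℕ) := by exact_mod_cast (by omega : 0 < k)
        exact max_lt h1 h2

lemma Q_natDegree {k : ℕ} (hk : 1 ≤ k) : (Q k).natDegree = k := by
  rw [Q_eq]
  rw [natDegree_sub_eq_left_of_natDegree_lt, natDegree_X_pow]
  rw [natDegree_X_pow]
  calc ((X:ℂ[X]) ^ (k-1) + 1).natDegree ≤ max ((X:ℂ[X])^(k-1)).natDegree (1:ℂ[X]).natDegree :=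
        natDegree_add_le _ _
    _ < k := by rw [natDegree_X_pow, natDegree_one]; omega

lemma Q_eval (k : ℕ) (z : ℂ) : (Q k).eval z = z ^ k - z ^ (k-1) - 1 := by
  simp [Q]

lemma Q_eval_crit {k : ℕ} (hk : 1 ≤ k) : (Q k).eval ((((k:ℝ)-1)/k : ℝ) : ℂ) ≠ 0 := by
  set t : ℝ := ((k:ℝ)-1)/k with ht
  have hk0 : (0:ℝ) < k := by exact_mod_cast hk
  have ht0 : 0 ≤ t := div_nonneg (by exact_mod_cast (sub_nonneg.mpr (by exact_mod_cast hk : (1:ℝ) ≤ k))) hk0.le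
  have ht1 : t ≤ 1 := le_of_lt ((div_lt_one hk0).mpr (by linarith))
  have hle : t ^ k ≤ t ^ (k-1) := pow_le_pow_of_le_one ht0 ht1 (by omega)
  have hlt : t ^ k - t ^ (k-1) - 1 < 0 := by linarith
  rw [Q_eval]
  have : ((t:ℂ)) ^ k - (t:ℂ) ^ (k-1) - 1 = ((t ^ k - t ^ (k-1) - 1 : ℝ) : ℂ) := by push_cast; ring
  rw [this]
  exact_mod_cast hlt.ne

lemma Q_deriv_eval (k : ℕ) (z : ℂ) :
    (derivative (Q k)).eval z = k * z^(k-1) - ((k-1:ℕ):ℂ) * z^(k-1-1) := by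
  simp [Q, derivative_X_pow]

lemma Q_separable {k : ℕ} (hk : 1 ≤ k) : (Q k).Separable := by
  rw [Separable, Polynomial.isCoprime_iff_aeval_ne_zero_of_isAlgClosed (k := ℂ) ℂ (Q k) (derivative (Q k))]
  intro a
  by_contra h
  push_neg at h
  obtain ⟨h1, h2⟩ := h
  simp only [aeval_def, eval₂_eq_eval_map, show algebraMap ℂ ℂ = RingHom.id ℂ from rfl,
    Polynomial.map_id] at h1 h2
  rw [Q_eval] at h1
  rw [Q_deriv_eval] at h2
  match k, hk with
  | 1, _ => norm_num at h2
  | (m+2), _ =>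
    rw [show m+2-1 = m+1 from rfl] at h1 h2
    rw [show m+1-1 = m from rfl] at h2
    have ha : a ≠ 0 := by
      rintro rfl
      simp [zero_pow] at h1
    have ham : a ^ m ≠ 0 := pow_ne_zero _ ha
    have h2' : ((m:ℂ)+2) * a * a^m = ((m:ℂ)+1) * a^m := by
      rw [sub_eq_zero] at h2
      push_cast at h2
      rw [← h2, pow_succ]; ring
    have h3 : ((m:ℂ)+2) * a = (m:ℂ)+1 := mul_right_cancel₀ ham h2'
    have hm2 : ((m:ℂ)+2) ≠ 0 := by
      have : ((m+2:ℕ):ℂ) ≠ 0 := Nat.cast_ne_zero.mpr (by omega)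
      push_cast at this; exact this
    have ha2 : a = ((m:ℂ)+1)/((m:ℂ)+2) := by
      field_simp
      linear_combination h3
    have hcrit := Q_eval_crit (k := m+2) (by omega)
    rw [Q_eval, show m+2-1 = m+1 from rfl] at hcrit
    apply hcrit
    have hco : ((((m+2:ℕ):ℝ)-1)/((m+2:ℕ):ℝ) : ℝ) = (a : ℂ) := by
      rw [ha2]; push_cast; ring
    rw [hco]
    exact h1

lemma Q_roots_nodup {k : ℕ} (hk : 1 ≤ k) : (Q k).roots.Nodup :=
  Polynomial.nodup_roots (Q_separable hk)

lemma Q_roots_card {k : ℕ} (hk : 1 ≤ k) : Multiset.card (Q k).roots = k := by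
  rw [splits_iff_card_roots.mp (IsAlgClosed.splits (Q k)), Q_natDegree hk]

lemma Q_toFinset_card {k : ℕ} (hk : 1 ≤ k) : (Q k).roots.toFinset.card = k := by
  rw [Multiset.toFinset_card_of_nodup (Q_roots_nodup hk), Q_roots_card hk]

lemma Q_eq_nodal {k : ℕ} (hk : 1 ≤ k) :
    Q k = Lagrange.nodal (Q k).roots.toFinset id := by
  conv_lhs => rw [← prod_multiset_X_sub_C_of_monic_of_roots_card_eq (Q_monic hk)
    (by rw [Q_roots_card hk, Q_natDegree hk])]
  rw [Lagrange.nodal, Finset.prod_eq_multiset_prod]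
  rw [Multiset.toFinset_val, Multiset.Nodup.dedup (Q_roots_nodup hk)]
  simp

lemma coeff_card_pred_eq_sum (s : Finset ℂ) (f : Polynomial ℂ) (hf : f.degree < s.card) :
    f.coeff (s.card - 1) = ∑ r ∈ s, f.eval r * (∏ t ∈ s.erase r, (r - t))⁻¹ := by
  classical
  have hinj : Set.InjOn (id : ℂ → ℂ) ↑s := fun a _ b _ h => h
  conv_lhs => rw [Lagrange.eq_interpolate (v := id) hinj hf]
  rw [Lagrange.interpolate_apply, finset_sum_coeff]
  refine Finset.sum_congr rfl fun r hr => ?_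
  rw [coeff_C_mul]
  congr 1
  have hnd := Lagrange.natDegree_basis hinj hr
  rw [← hnd, coeff_natDegree, Lagrange.basis, leadingCoeff_prod, ← Finset.prod_inv_distrib]
  refine Finset.prod_congr rfl fun t ht => ?_
  have hrt : (id r : ℂ) ≠ id t := by
    have := (Finset.mem_erase.mp ht).1
    simpa [eq_comm] using this
  rw [Lagrange.basisDivisor, leadingCoeff_mul, leadingCoeff_C, (monic_X_sub_C (id t)).leadingCoeff,
    mul_one]
  rfl

noncomputable def P (k m : ℕ) : Polynomial ℂ := X ^ m %ₘ Q k
noncomputable def D (k m : ℕ) : ℂ := (P k m).coeff (k - 1)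

lemma Q_degree {k : ℕ} (hk : 1 ≤ k) : (Q k).degree = k := by
  rw [degree_eq_natDegree (Q_monic hk).ne_zero, Q_natDegree hk]

lemma P_degree_lt {k : ℕ} (hk : 1 ≤ k) (m : ℕ) : (P k m).degree < (k : WithBot ℕ) := by
  rw [← Q_degree hk]
  exact degree_modByMonic_lt _ (Q_monic hk)

lemma P_eval {k : ℕ} (hk : 1 ≤ k) {r : ℂ} (hr : (Q k).eval r = 0) (m : ℕ) :
    (P k m).eval r = r ^ m := by
  have h := modByMonic_add_div (X ^ m : Polynomial ℂ) (Q k)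
  have := congrArg (eval r) h
  simpa [hr, P] using this

lemma P_small {k : ℕ} (hk : 1 ≤ k) {m : ℕ} (hm : m < k) : P k m = X ^ m := by
  rw [P, modByMonic_eq_self_iff (Q_monic hk), Q_degree hk, degree_X_pow]
  exact_mod_cast hm

lemma P_rec {k : ℕ} (hk : 1 ≤ k) (m : ℕ) : P k (m + k) = P k (m + k - 1) + P k m := by
  have key : (X : Polynomial ℂ) ^ (m + k) = X ^ m * Q k + X ^ (m + k - 1) + X ^ m := by
    rw [Q, show m + k - 1 = m + (k - 1) from by omega, pow_add, pow_add]
    ring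
  rw [P, key, add_modByMonic, add_modByMonic,
    (modByMonic_eq_zero_iff_dvd (Q_monic hk)).mpr (dvd_mul_left _ _), zero_add]
  rfl

lemma D_small {k : ℕ} (hk : 1 ≤ k) {m : ℕ} (hm : m < k) :
    D k m = if k - 1 = m then 1 else 0 := by
  rw [D, P_small hk hm, coeff_X_pow]

lemma D_rec {k : ℕ} (hk : 1 ≤ k) (m : ℕ) : D k (m + k) = D k (m + k - 1) + D k m := by
  rw [D, D, D, P_rec hk, coeff_add]

lemma D_one {k : ℕ} (hk : 1 ≤ k) : ∀ j, j ≤ k - 1 → D k (k - 1 + j) = 1 := by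
  intro j
  induction j with
  | zero => intro _; rw [Nat.add_zero, D_small hk (by omega), if_pos rfl]
  | succ j ih =>
    intro hj
    rw [show k - 1 + (j + 1) = j + k from by omega, D_rec hk, show j + k - 1 = k - 1 + j from by omega,
      ih (by omega), D_small hk (by omega), if_neg (by omega)]
    norm_num

lemma D_init {k : ℕ} (hk : 1 ≤ k) : ∀ n, n ≤ k - 1 → D k (n + (2 * k - 2)) = (n : ℂ) + 1 := by
  intro n
  induction n with
  | zero =>
    intro _
    rw [show 0 + (2 * k - 2) = k - 1 + (k - 1) from by omega, D_one hk (k - 1) le_rfl]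
    norm_num
  | succ n ih =>
    intro hn
    rw [show n + 1 + (2 * k - 2) = (n + k - 1) + k from by omega, D_rec hk,
      show n + k - 1 + k - 1 = n + (2 * k - 2) from by omega,
      show n + k - 1 = k - 1 + n from by omega,
      ih (by omega), D_one hk n (by omega)]
    push_cast
    ring

lemma A_small {k n : ℕ} (hn : n < k) : A k n = n + 1 := by
  cases n with
  | zero => rw [A]
  | succ p => rw [A, if_pos hn]

lemma A_rec {k n : ℕ} (hk : 1 ≤ k) (hn : k ≤ n) : A k n = A k (n - 1) + A k (n - k) := by
  obtain ⟨p, rfl⟩ : ∃ p, n = p + 1 := ⟨n - 1, by omega⟩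
  rw [A, if_neg (by omega), show max k 1 = k from by omega]
  rfl

lemma A_eq_D {k : ℕ} (hk : 1 ≤ k) : ∀ n, (A k n : ℂ) = D k (n + (2 * k - 2)) := by
  intro n
  induction n using Nat.strong_induction_on with
  | _ n ih =>
    rcases lt_or_ge n k with hn | hn
    · rw [A_small hn, D_init hk n (by omega)]
      push_cast; ring
    · rw [A_rec hk hn,
        show n + (2 * k - 2) = (n - k) + (2 * k - 2) + k from by omega, D_rec hk,
        show n - k + (2 * k - 2) + k - 1 = (n - 1) + (2 * k - 2) from by omega,
        ← ih (n - 1) (by omega), ← ih (n - k) (by omega)]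
      push_cast
      ring

set_option maxHeartbeats 2000000 in
/-- `Q_k` has `k` distinct complex roots, the coefficients
`c(r) = r^k / (k·r - (k-1))` are all nonzero, and
`A_{k,n} = Σ_r c(r)·r^n` over the roots `r` of `Q_k`. -/
theorem A_eq_sum_root_powers (k : ℕ) (hk : 1 ≤ k) :
    (Q k).roots.toFinset.card = k ∧
    (∀ r ∈ (Q k).roots.toFinset, r ^ k / ((k : ℂ) * r - ((k : ℂ) - 1)) ≠ 0) ∧
    (∀ n : ℕ, (A k n : ℂ) =
      ∑ r ∈ (Q k).roots.toFinset, r ^ k / ((k : ℂ) * r - ((k : ℂ) - 1)) * r ^ n) := by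
  classical
  set S := (Q k).roots.toFinset with hS
  have hcard : S.card = k := Q_toFinset_card hk
  have hroot : ∀ r ∈ S, (Q k).eval r = 0 := by
    intro r hr
    exact ((mem_roots'.mp (Multiset.mem_toFinset.mp hr)).2 : _)
  have hr0 : ∀ r ∈ S, r ≠ 0 := by
    intro r hr hr0
    have h := hroot r hr
    rw [hr0, Q_eval] at h
    rcases Nat.lt_or_ge k 2 with h2 | h2
    · interval_cases k <;> norm_num at h
    · rw [zero_pow (by omega), zero_pow (by omega)] at h; norm_num at h
  have hden : ∀ r ∈ S, (k : ℂ) * r - ((k : ℂ) - 1) ≠ 0 := by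
    intro r hr h
    have hkc : (k : ℂ) ≠ 0 := Nat.cast_ne_zero.mpr (by omega)
    have hreq : r = ((k : ℂ) - 1) / k := by
      field_simp
      linear_combination h
    have hcrit := Q_eval_crit hk
    apply hcrit
    have : ((((k:ℝ)-1)/(k:ℝ) : ℝ) : ℂ) = r := by
      rw [hreq]; push_cast; ring
    rw [this]
    exact hroot r hr
  refine ⟨hcard, fun r hr => div_ne_zero (pow_ne_zero _ (hr0 r hr)) (hden r hr), ?_⟩
  intro n
  rw [A_eq_D hk n]
  have hdeg : (P k (n + (2 * k - 2))).degree < (S.card : WithBot ℕ) := by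
    rw [hcard]; exact P_degree_lt hk _
  have hsum := coeff_card_pred_eq_sum S (P k (n + (2 * k - 2))) hdeg
  rw [D, show k - 1 = S.card - 1 from by omega, hsum]
  refine Finset.sum_congr rfl fun r hr => ?_
  rw [P_eval hk (hroot r hr)]
  have hprod : ∏ t ∈ S.erase r, (r - t) = (derivative (Q k)).eval r := by
    have h' := Lagrange.eval_nodal_derivative_eval_node_eq
      (s := (Q k).roots.toFinset) (v := (id : ℂ → ℂ)) (i := r) (by exact hr)
    rw [Lagrange.eval_nodal] at h'
    simp only [id] at h'
    rw [Q_eq_nodal hk]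
    exact h'.symm
  rw [hprod, Q_deriv_eval]
  have hrne := hr0 r hr
  have hdne := hden r hr
  match k, hk with
  | 1, _ =>
    have h2 : r = 2 := by
      have h := hroot r hr
      rw [Q_eval] at h
      norm_num at h
      linear_combination h
    subst h2
    norm_num
  | (m+2), _ =>
    rw [show m + 2 - 1 = m + 1 from rfl, show m + 1 - 1 = m from rfl]
    have h1 : ((m+2:ℕ):ℂ) * r^(m+1) - ((m+1:ℕ):ℂ) * r^m
        = r^m * (((m+2:ℕ):ℂ) * r - (((m+2:ℕ):ℂ) - 1)) := by
      push_cast; rw [pow_succ]; ring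
    rw [h1]
    rw [show n + (2 * (m+2) - 2) = (m+2) + n + m from by omega, pow_add, pow_add]
    have hm0 : r ^ m ≠ 0 := pow_ne_zero _ hrne
    push_cast at hdne ⊢
    field_simp
end
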